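/- arXiv:1609.07269 — 7 statements merged into one kernel-verified Lean document; each statement's English description precedes it below -/
import Mathlib

section
/- For every δ > 0 with τ−2+δ < 1 there exists k₀ such that whenever y₀ = k ≥ k₀ (equivalently, whenever B(log k)^{γ−1} ≤ δ), the recursively defined sequence satisfies, for all i ≥ 0, k^{(1/(τ−2+δ))^i} ≤ y_i ≤ k^{(1/(τ−2))^i}. -/
/-- For every `δ > 0` with `τ - 2 + δ < 1` there exists `k₀` such that whenever
`y 0 = k ≥ k₀`, the recursively defined sequence
`y (i+1) = y i ^ (1 / (τ - 2 + B * (log (y i)) ^ (γ - 1)))` satisfies, for all `i ≥ 0`,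
`k ^ ((1/(τ-2+δ))^i) ≤ y i ≤ k ^ ((1/(τ-2))^i)`. -/
theorem stmt0 (τ γ B : ℝ) (hτ : 2 < τ ∧ τ < 3) (hγ : 0 < γ ∧ γ < 1) (hB : 0 < B)
    (δ : ℝ) (hδ : 0 < δ) (hδ' : τ - 2 + δ < 1) :
    ∃ k₀ : ℝ, 1 < k₀ ∧ ∀ k : ℝ, k₀ ≤ k →
      ∀ y : ℕ → ℝ, y 0 = k →
        (∀ i : ℕ, y (i + 1) = (y i) ^ (1 / (τ - 2 + B * (Real.log (y i)) ^ (γ - 1)))) →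
        ∀ i : ℕ, k ^ ((1 / (τ - 2 + δ)) ^ i) ≤ y i ∧ y i ≤ k ^ ((1 / (τ - 2)) ^ i) := by
  obtain ⟨hτ2, hτ3⟩ := hτ
  obtain ⟨hγ0, hγ1⟩ := hγ
  have hc0 : 0 < τ - 2 := by linarith
  have hcδ : 0 < τ - 2 + δ := by linarith
  -- choose k₀
  set L : ℝ := (B / δ) ^ (1 / (1 - γ)) with hL
  have hBδ : 0 < B / δ := div_pos hB hδ
  have hLpos : 0 < L := Real.rpow_pos_of_pos hBδ _
  refine ⟨Real.exp L, Real.one_lt_exp_iff.mpr hLpos, ?_⟩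
  intro k hk y hy0 hrec
  have hk1 : 1 < k := lt_of_lt_of_le (Real.one_lt_exp_iff.mpr hLpos) hk
  have hlogk : L ≤ Real.log k := by
    have := Real.log_le_log (Real.exp_pos L) hk
    rwa [Real.log_exp] at this
  have hlogk0 : 0 < Real.log k := lt_of_lt_of_le hLpos hlogk
  -- key: for x ≥ k, B * (log x)^(γ-1) ≤ δ
  have key : ∀ x : ℝ, k ≤ x → B * (Real.log x) ^ (γ - 1) ≤ δ := by
    intro x hx
    have hlogx : L ≤ Real.log x := le_trans hlogk
      (Real.log_le_log (by linarith) hx)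
    have h1 : (Real.log x) ^ (γ - 1) ≤ L ^ (γ - 1) :=
      Real.rpow_le_rpow_of_nonpos hLpos hlogx (by linarith)
    have h2 : L ^ (γ - 1) = δ / B := by
      rw [hL, ← Real.rpow_mul hBδ.le]
      have : 1 / (1 - γ) * (γ - 1) = -1 := by
        have hne : (1:ℝ) - γ ≠ 0 := by linarith
        field_simp
        ring
      rw [this, Real.rpow_neg_one]
      field_simp
    rw [h2] at h1
    calc B * (Real.log x) ^ (γ - 1) ≤ B * (δ / B) :=
          mul_le_mul_of_nonneg_left h1 hB.le
      _ = δ := by field_simp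
  -- main induction
  intro i
  induction i with
  | zero => simp [hy0]
  | succ n ih =>
    obtain ⟨hlo, hhi⟩ := ih
    have hrpos : (1:ℝ) < 1 / (τ - 2 + δ) := one_lt_one_div hcδ hδ'
    have han0 : (0:ℝ) < (1 / (τ - 2 + δ)) ^ n := by positivity
    have hbn0 : (0:ℝ) < (1 / (τ - 2)) ^ n := by positivity
    have han1 : (1:ℝ) ≤ (1 / (τ - 2 + δ)) ^ n := one_le_pow₀ hrpos.le
    have hkyn : k ≤ y n := by
      calc k = k ^ (1:ℝ) := (Real.rpow_one k).symm
        _ ≤ k ^ ((1 / (τ - 2 + δ)) ^ n : ℝ) :=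
            Real.rpow_le_rpow_of_exponent_le hk1.le han1
        _ ≤ y n := hlo
    have hyn1 : 1 < y n := lt_of_lt_of_le hk1 hkyn
    have hlogyn : 0 < Real.log (y n) := Real.log_pos hyn1
    have hEpos : 0 < B * (Real.log (y n)) ^ (γ - 1) :=
      mul_pos hB (Real.rpow_pos_of_pos hlogyn _)
    have hEδ : B * (Real.log (y n)) ^ (γ - 1) ≤ δ := key _ hkyn
    set e : ℝ := 1 / (τ - 2 + B * (Real.log (y n)) ^ (γ - 1)) with he
    have hden : 0 < τ - 2 + B * (Real.log (y n)) ^ (γ - 1) := by linarith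
    have he1 : 1 / (τ - 2 + δ) ≤ e := one_div_le_one_div_of_le hden (by linarith)
    have he2 : e ≤ 1 / (τ - 2) := one_div_le_one_div_of_le hc0 (by linarith)
    have hepos : 0 < e := lt_of_lt_of_le (by positivity) he1
    have hrecn := hrec n
    constructor
    · -- lower bound
      have h1 : (k ^ ((1 / (τ - 2 + δ)) ^ n : ℝ)) ^ e ≤ (y n) ^ e :=
        Real.rpow_le_rpow (by positivity) hlo hepos.le
      have h2 : k ^ ((1 / (τ - 2 + δ)) ^ (n + 1) : ℝ)
          ≤ (k ^ ((1 / (τ - 2 + δ)) ^ n : ℝ)) ^ e := by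
        rw [← Real.rpow_mul (by positivity : (0:ℝ) ≤ k)]
        apply Real.rpow_le_rpow_of_exponent_le hk1.le
        rw [pow_succ]
        exact mul_le_mul_of_nonneg_left he1 han0.le
      rw [hrecn, ← he]
      exact le_trans h2 h1
    · -- upper bound
      have h1 : (y n) ^ e ≤ (k ^ ((1 / (τ - 2)) ^ n : ℝ)) ^ e :=
        Real.rpow_le_rpow (by positivity) hhi hepos.le
      have h2 : (k ^ ((1 / (τ - 2)) ^ n : ℝ)) ^ e ≤ k ^ ((1 / (τ - 2)) ^ (n + 1) : ℝ) := by
        rw [← Real.rpow_mul (by positivity : (0:ℝ) ≤ k)]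
        apply Real.rpow_le_rpow_of_exponent_le hk1.le
        rw [pow_succ]
        exact mul_le_mul_of_nonneg_left he2 hbn0.le
      rw [hrecn, ← he]
      exact le_trans h1 h2
end

section
/- For every C > 0 and every B > 2C there exists k₀ such that for all y₀ = k ≥ k₀ and all i ≥ 0 the recursively defined sequence satisfies y_{i+1}^{2−τ−C(log y_{i+1})^{γ−1}} · y_i ≥ exp( C (log y_i)^γ ). -/
open Real

/-- Key log-level inequality. -/
lemma stmt1_aux (τ γ C B L : ℝ) (hτ2 : 2 < τ) (hγ1 : γ < 1)
    (hC : 0 < C) (hB : 2 * C < B) (hL : 0 < L)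
    (hD1 : τ - 2 + B * L ^ (γ - 1) ≤ 1) :
    C * L ^ γ ≤
      (2 - τ - C * (L / (τ - 2 + B * L ^ (γ - 1))) ^ (γ - 1)) *
        (L / (τ - 2 + B * L ^ (γ - 1))) + L := by
  have hB0 : 0 < B := lt_trans (by linarith) hB
  set D : ℝ := τ - 2 + B * L ^ (γ - 1) with hDdef
  clear_value D
  have hLp : (0:ℝ) < L ^ (γ - 1) := rpow_pos_of_pos hL _
  have hD0 : 0 < D := by
    have : 0 < B * L ^ (γ - 1) := mul_pos hB0 hLp
    simp only [hDdef]; linarith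
  have hLD : 0 < L / D := div_pos hL hD0
  have h1 : (L / D) ^ (γ - 1) * (L / D) = (L / D) ^ γ := by
    rw [← Real.rpow_add_one (ne_of_gt hLD)]; ring_nf
  have h2 : (L / D) ^ γ = L ^ γ / D ^ γ := Real.div_rpow hL.le hD0.le γ
  have h3 : L ^ (γ - 1) * L = L ^ γ := by
    rw [← Real.rpow_add_one (ne_of_gt hL)]; ring_nf
  have hLγ : (0:ℝ) < L ^ γ := rpow_pos_of_pos hL _
  have hDγ : (0:ℝ) < D ^ γ := rpow_pos_of_pos hD0 _
  have hDle : D ≤ D ^ γ := by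
    calc D = D ^ (1:ℝ) := (Real.rpow_one D).symm
    _ ≤ D ^ γ := Real.rpow_le_rpow_of_exponent_ge hD0 hD1 (by linarith)
  have hcore : C ≤ B / D - C / D ^ γ := by
    have h4 : C / D ^ γ ≤ C / D := div_le_div_of_nonneg_left hC.le hD0 hDle
    have h5 : B - C ≤ (B - C) / D := by
      rw [le_div_iff₀ hD0]; nlinarith
    have h6 : (B - C) / D = B / D - C / D := by ring
    linarith
  have hX : (L / D) ^ (γ - 1) * (L / D) = L ^ γ / D ^ γ := h1.trans h2
  have h2mτ : 2 - τ = B * L ^ (γ - 1) - D := by rw [hDdef]; ring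
  have hexp : (2 - τ - C * (L / D) ^ (γ - 1)) * (L / D) + L
      = L ^ γ * (B / D - C / D ^ γ) := by
    have hX2 : (L / D) ^ (γ - 1) * L * D ^ γ = L ^ γ * D := by
      field_simp at hX
      linarith [hX]
    rw [h2mτ]
    field_simp
    linear_combination (B * D ^ γ) * h3 - C * hX2
  rw [hexp]
  calc C * L ^ γ = L ^ γ * C := by ring
  _ ≤ L ^ γ * (B / D - C / D ^ γ) := mul_le_mul_of_nonneg_left hcore hLγ.le

theorem stmt1 (τ γ : ℝ) (hτ : 2 < τ ∧ τ < 3) (hγ : 0 < γ ∧ γ < 1)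
    (C : ℝ) (hC : 0 < C) (B : ℝ) (hB : 2 * C < B) :
    ∃ k₀ : ℝ, 1 < k₀ ∧ ∀ k : ℝ, k₀ ≤ k →
      ∀ y : ℕ → ℝ, y 0 = k →
        (∀ i : ℕ, y (i + 1) = (y i) ^ (1 / (τ - 2 + B * (Real.log (y i)) ^ (γ - 1)))) →
        ∀ i : ℕ,
          (y (i + 1)) ^ (2 - τ - C * (Real.log (y (i + 1))) ^ (γ - 1)) * y i ≥
            Real.exp (C * (Real.log (y i)) ^ γ) := by
  obtain ⟨hτ2, hτ3⟩ := hτ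
  obtain ⟨hγ0, hγ1⟩ := hγ
  have hB0 : 0 < B := lt_trans (by linarith) hB
  have h3τ : 0 < 3 - τ := by linarith
  have hBd : 0 < B / (3 - τ) := div_pos hB0 h3τ
  have h1γ : (0:ℝ) < 1 - γ := by linarith
  set N : ℝ := (B / (3 - τ)) ^ (1 / (1 - γ)) with hNdef
  set M : ℝ := max 1 N with hMdef
  have hM1 : (1:ℝ) ≤ M := le_max_left _ _
  have hMN : N ≤ M := le_max_right _ _
  have hM0 : (0:ℝ) < M := by linarith
  have hN0 : (0:ℝ) ≤ N := by rw [hNdef]; positivity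
  have hNval : N ^ (1 - γ) = B / (3 - τ) := by
    rw [hNdef, ← Real.rpow_mul hBd.le, one_div_mul_cancel (by linarith : (1:ℝ) - γ ≠ 0),
      Real.rpow_one]
  have hsmall : ∀ L : ℝ, M ≤ L → B * L ^ (γ - 1) ≤ 3 - τ := by
    intro L hL
    have hL1 : (1:ℝ) ≤ L := le_trans hM1 hL
    have hL0 : (0:ℝ) < L := by linarith
    have hNL : N ≤ L := le_trans hMN hL
    have hpow : B / (3 - τ) ≤ L ^ (1 - γ) := by
      calc B / (3 - τ) = N ^ (1 - γ) := hNval.symm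
      _ ≤ L ^ (1 - γ) := Real.rpow_le_rpow hN0 hNL h1γ.le
    have hinv : L ^ (γ - 1) = (L ^ (1 - γ))⁻¹ := by
      rw [← Real.rpow_neg hL0.le]; ring_nf
    rw [hinv, mul_inv_le_iff₀ (by positivity)]
    calc B = (B / (3 - τ)) * (3 - τ) := by field_simp
    _ ≤ (3 - τ) * L ^ (1 - γ) := by nlinarith
  refine ⟨Real.exp M, Real.one_lt_exp_iff.mpr hM0, ?_⟩
  intro k hk y hy0 hrec
  have inv : ∀ i, 1 < y i ∧ M ≤ Real.log (y i) := by
    intro i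
    induction i with
    | zero =>
        have h1 : Real.exp M ≤ y 0 := by rw [hy0]; exact hk
        have hy0p : (1:ℝ) < y 0 :=
          lt_of_lt_of_le (Real.one_lt_exp_iff.mpr hM0) h1
        refine ⟨hy0p, ?_⟩
        calc M = Real.log (Real.exp M) := (Real.log_exp M).symm
        _ ≤ Real.log (y 0) := Real.log_le_log (Real.exp_pos M) h1
    | succ i ih =>
        obtain ⟨hyi1, hyiM⟩ := ih
        have hyi0 : (0:ℝ) < y i := by linarith
        set L : ℝ := Real.log (y i) with hLdef
        have hL0 : (0:ℝ) < L := by linarith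
        have hDsmall := hsmall L hyiM
        have hLp : (0:ℝ) < L ^ (γ - 1) := rpow_pos_of_pos hL0 _
        have hD0 : 0 < τ - 2 + B * L ^ (γ - 1) := by nlinarith
        have hone_le : (1:ℝ) ≤ 1 / (τ - 2 + B * L ^ (γ - 1)) := by
          rw [le_div_iff₀ hD0]; linarith
        constructor
        · rw [hrec i]
          exact Real.one_lt_rpow_iff_of_pos hyi0 |>.mpr (Or.inl ⟨hyi1, by positivity⟩)
        · rw [hrec i, Real.log_rpow hyi0]
          nlinarith
  intro i
  obtain ⟨hyi1, hyiM⟩ := inv i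
  obtain ⟨hyi1', hyiM'⟩ := inv (i + 1)
  have hyi0 : (0:ℝ) < y i := by linarith
  have hyi0' : (0:ℝ) < y (i + 1) := by linarith
  set L : ℝ := Real.log (y i) with hLdef
  have hL0 : (0:ℝ) < L := by linarith
  have hDsmall := hsmall L hyiM
  have hLp : (0:ℝ) < L ^ (γ - 1) := rpow_pos_of_pos hL0 _
  have hD0 : 0 < τ - 2 + B * L ^ (γ - 1) := by nlinarith
  have hD1 : τ - 2 + B * L ^ (γ - 1) ≤ 1 := by linarith
  have hloge : Real.log (y (i + 1)) = L / (τ - 2 + B * L ^ (γ - 1)) := by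
    rw [hrec i, Real.log_rpow hyi0]; ring
  have key := stmt1_aux τ γ C B L hτ2 hγ1 hC hB hL0 hD1
  rw [ge_iff_le, ← Real.exp_log (mul_pos (rpow_pos_of_pos hyi0' _) hyi0),
    Real.exp_le_exp, Real.log_mul (by positivity) (by positivity),
    Real.log_rpow hyi0', hloge]
  exact key
end

section
/- For every C > 0, every B > 2C and every constant c̃ > 0, the sums S(k) := ∑_{i=0}^∞ exp( −c̃ · y_{i+1}^{2−τ−C(log y_{i+1})^{γ−1}} · y_i ) (computed from the recursion started at y₀ = k) are finite for all sufficiently large k, and S(k) → 0 as k → ∞. -/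
set_option maxHeartbeats 1000000
/-- The recursively defined sequence `y 0 = k`,
`y (i+1) = y i ^ (1 / (τ - 2 + B * (log (y i)) ^ (γ - 1)))`. -/
noncomputable def ySeq (τ γ B k : ℝ) : ℕ → ℝ
  | 0 => k
  | (i + 1) => (ySeq τ γ B k i) ^ (1 / (τ - 2 + B * (Real.log (ySeq τ γ B k i)) ^ (γ - 1)))

open Real Filter

private lemma growth (τ γ B M k : ℝ) (hτ1 : 2 < τ) (hτ2 : τ < 3)
    (hγ2 : γ < 1) (hB : 0 < B) (hM1 : 1 ≤ M)
    (hMε : B * M ^ (γ - 1) ≤ (3 - τ) / 2) (hk : M ≤ Real.log k) (hk1 : 1 < k) :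
    ∀ i : ℕ, 1 < ySeq τ γ B k i ∧
      (2 / (τ - 1)) ^ i * Real.log k ≤ Real.log (ySeq τ γ B k i) := by
  have hlogk : 0 < Real.log k := lt_of_lt_of_le (by linarith) hk
  have hρ0 : (0:ℝ) < 2 / (τ - 1) := div_pos two_pos (by linarith)
  have hρ : 1 ≤ 2 / (τ - 1) := by rw [le_div_iff₀ (by linarith)]; linarith
  intro i
  induction i with
  | zero =>
    refine ⟨hk1, ?_⟩
    simp [ySeq]
  | succ i ih =>
    obtain ⟨hy1, hL⟩ := ih
    set y := ySeq τ γ B k i with hy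
    have hstep : ySeq τ γ B k (i + 1)
        = y ^ (1 / (τ - 2 + B * (Real.log y) ^ (γ - 1))) := rfl
    clear_value y
    have hy0 : 0 < y := lt_trans one_pos hy1
    have hρpow : 1 ≤ (2 / (τ - 1)) ^ i := one_le_pow₀ hρ
    have hLM : M ≤ Real.log y :=
      le_trans (le_trans hk (le_mul_of_one_le_left hlogk.le hρpow)) hL
    have hL0 : 0 < Real.log y := lt_of_lt_of_le (by linarith) hLM
    have hBL : B * (Real.log y) ^ (γ - 1) ≤ (3 - τ) / 2 := by
      refine le_trans ?_ hMε
      exact mul_le_mul_of_nonneg_left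
        (Real.rpow_le_rpow_of_nonpos (by linarith) hLM (by linarith)) hB.le
    have hd0 : 0 < τ - 2 + B * (Real.log y) ^ (γ - 1) := by
      have : 0 ≤ B * (Real.log y) ^ (γ - 1) :=
        mul_nonneg hB.le (Real.rpow_nonneg hL0.le _)
      linarith
    constructor
    · rw [hstep]
      exact (Real.one_lt_rpow_iff_of_pos hy0).mpr (Or.inl ⟨hy1, one_div_pos.mpr hd0⟩)
    · rw [hstep, Real.log_rpow hy0]
      have h1 : (2 / (τ - 1)) * Real.log y
          ≤ (1 / (τ - 2 + B * (Real.log y) ^ (γ - 1))) * Real.log y := by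
        apply mul_le_mul_of_nonneg_right _ hL0.le
        rw [div_le_div_iff₀ (by linarith) hd0]
        linarith
      calc (2 / (τ - 1)) ^ (i + 1) * Real.log k
          = (2 / (τ - 1)) * ((2 / (τ - 1)) ^ i * Real.log k) := by ring
        _ ≤ (2 / (τ - 1)) * Real.log y := mul_le_mul_of_nonneg_left hL hρ0.le
        _ ≤ _ := h1

private lemma keybound (τ γ C B M k : ℝ) (hτ1 : 2 < τ) (hτ2 : τ < 3)
    (hγ1 : 0 < γ) (hγ2 : γ < 1) (hC : 0 < C) (hBC : C < B) (hM1 : 1 ≤ M)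
    (hMε : B * M ^ (γ - 1) ≤ (3 - τ) / 2)
    (hM2 : 1 ≤ (B - C) * γ * Real.log (2 / (τ - 1)) * M ^ γ)
    (hk : M ≤ Real.log k) (hk1 : 1 < k) (i : ℕ) :
    Real.exp ((B - C) * (Real.log k) ^ γ) + i ≤
      (ySeq τ γ B k (i + 1)) ^
        (2 - τ - C * (Real.log (ySeq τ γ B k (i + 1))) ^ (γ - 1)) *
        ySeq τ γ B k i := by
  have hlogk : 0 < Real.log k := lt_of_lt_of_le (by linarith) hk
  have hρ0 : (0:ℝ) < 2 / (τ - 1) := div_pos two_pos (by linarith)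
  have hρ : 1 < 2 / (τ - 1) := by rw [lt_div_iff₀ (by linarith)]; linarith
  have hlogρ : 0 < Real.log (2 / (τ - 1)) := Real.log_pos hρ
  obtain ⟨hy1, hL⟩ := growth τ γ B M k hτ1 hτ2 hγ2 (by linarith) hM1 hMε hk hk1 i
  obtain ⟨hy1', hL'big⟩ := growth τ γ B M k hτ1 hτ2 hγ2 (by linarith) hM1 hMε hk hk1 (i + 1)
  set y := ySeq τ γ B k i with hydef
  set y' := ySeq τ γ B k (i + 1) with hy'def
  have hstep0 : y' = y ^ (1 / (τ - 2 + B * (Real.log y) ^ (γ - 1))) := rfl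
  clear_value y y'
  have hy0 : 0 < y := lt_trans one_pos hy1
  have hy'0 : 0 < y' := lt_trans one_pos hy1'
  set L := Real.log y with hLdef
  set L' := Real.log y' with hL'def
  clear_value L L'
  have hρpow : 1 ≤ (2 / (τ - 1)) ^ i := one_le_pow₀ hρ.le
  have hLM : M ≤ L := le_trans (le_trans hk (le_mul_of_one_le_left hlogk.le hρpow)) hL
  have hL0 : 0 < L := lt_of_lt_of_le (by linarith) hLM
  have hBL : B * L ^ (γ - 1) ≤ (3 - τ) / 2 := by
    refine le_trans ?_ hMε
    exact mul_le_mul_of_nonneg_left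
      (Real.rpow_le_rpow_of_nonpos (by linarith) hLM (by linarith)) (by linarith)
  have hd0 : 0 < τ - 2 + B * L ^ (γ - 1) := by
    have : 0 ≤ B * L ^ (γ - 1) := mul_nonneg (by linarith) (Real.rpow_nonneg hL0.le _)
    linarith
  have hstep : y' = y ^ (1 / (τ - 2 + B * L ^ (γ - 1))) := by rw [hstep0, hLdef]
  have hL'eq : L' = (1 / (τ - 2 + B * L ^ (γ - 1))) * L := by
    rw [hL'def, hstep, Real.log_rpow hy0, ← hLdef]
  have hLeq : L = (τ - 2 + B * L ^ (γ - 1)) * L' := by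
    rw [hL'eq, one_div]
    exact (mul_inv_cancel_left₀ hd0.ne' L).symm
  have hLL' : L ≤ L' := by
    rw [hL'eq]
    refine le_mul_of_one_le_left hL0.le ?_
    rw [le_div_iff₀ hd0]
    linarith
  have hL'0 : 0 < L' := lt_of_lt_of_le hL0 hLL'
  -- product as exponential
  have hprod : y' ^ (2 - τ - C * L' ^ (γ - 1)) * y
      = Real.exp (L' * (2 - τ - C * L' ^ (γ - 1)) + L) := by
    rw [Real.rpow_def_of_pos hy'0, ← hL'def, Real.exp_add, hLdef, Real.exp_log hy0]
  rw [hprod]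
  -- the exponent bound
  have hCL' : C * L' ^ (γ - 1) ≤ C * L ^ (γ - 1) :=
    mul_le_mul_of_nonneg_left
      (Real.rpow_le_rpow_of_nonpos hL0 hLL' (by linarith)) hC.le
  have hLγ : L ^ (γ - 1) * L = L ^ γ := by
    rw [← Real.rpow_add_one (ne_of_gt hL0)]
    ring_nf
  have hBCpos : (0:ℝ) < B - C := by linarith
  have hE1 : (B - C) * L ^ γ ≤ L' * (2 - τ - C * L' ^ (γ - 1)) + L := by
    have h1 : L' * (2 - τ - C * L' ^ (γ - 1)) + L
        = L' * (B * L ^ (γ - 1) - C * L' ^ (γ - 1)) := by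
      linear_combination hLeq
    rw [h1]
    have h2 : (B - C) * L ^ (γ - 1) ≤ B * L ^ (γ - 1) - C * L' ^ (γ - 1) := by
      nlinarith [Real.rpow_nonneg hL0.le (γ - 1)]
    calc (B - C) * L ^ γ = L * ((B - C) * L ^ (γ - 1)) := by rw [← hLγ]; ring
      _ ≤ L' * ((B - C) * L ^ (γ - 1)) := by
          refine mul_le_mul_of_nonneg_right hLL' ?_
          exact mul_nonneg hBCpos.le (Real.rpow_nonneg hL0.le _)
      _ ≤ L' * (B * L ^ (γ - 1) - C * L' ^ (γ - 1)) :=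
          mul_le_mul_of_nonneg_left h2 hL'0.le
  -- lower bound for L^γ
  have hLγbig : (1 + i * γ * Real.log (2 / (τ - 1))) * (Real.log k) ^ γ ≤ L ^ γ := by
    have h1 : ((2 / (τ - 1)) ^ i * Real.log k) ^ γ
        = ((2 / (τ - 1)) ^ i) ^ γ * (Real.log k) ^ γ :=
      Real.mul_rpow (pow_nonneg hρ0.le i) hlogk.le
    have h2 : ((2 / (τ - 1)) ^ i : ℝ) ^ γ = Real.exp (i * γ * Real.log (2 / (τ - 1))) := by
      rw [← Real.rpow_natCast (2 / (τ - 1)) i, ← Real.rpow_mul hρ0.le,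
        Real.rpow_def_of_pos hρ0]
      ring_nf
    have h3 : 1 + i * γ * Real.log (2 / (τ - 1))
        ≤ Real.exp (i * γ * Real.log (2 / (τ - 1))) := by
      have := Real.add_one_le_exp (i * γ * Real.log (2 / (τ - 1)))
      linarith
    have h4 : (1 + i * γ * Real.log (2 / (τ - 1))) * (Real.log k) ^ γ
        ≤ ((2 / (τ - 1)) ^ i * Real.log k) ^ γ := by
      rw [h1, h2]
      exact mul_le_mul_of_nonneg_right h3 (Real.rpow_nonneg hlogk.le _)
    refine h4.trans ?_
    exact Real.rpow_le_rpow (mul_nonneg (pow_nonneg hρ0.le i) hlogk.le) hL hγ1.le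
  have hMγ : M ^ γ ≤ (Real.log k) ^ γ := Real.rpow_le_rpow (by linarith) hk hγ1.le
  have hconst : 1 ≤ (B - C) * γ * Real.log (2 / (τ - 1)) * (Real.log k) ^ γ := by
    refine hM2.trans ?_
    exact mul_le_mul_of_nonneg_left hMγ (mul_nonneg (mul_nonneg hBCpos.le hγ1.le) hlogρ.le)
  have hE2 : (B - C) * (Real.log k) ^ γ + i ≤ (B - C) * L ^ γ := by
    have h5 : (B - C) * ((1 + i * γ * Real.log (2 / (τ - 1))) * (Real.log k) ^ γ)
        ≤ (B - C) * L ^ γ := mul_le_mul_of_nonneg_left hLγbig hBCpos.le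
    have h6 : (B - C) * (Real.log k) ^ γ + i
        ≤ (B - C) * ((1 + i * γ * Real.log (2 / (τ - 1))) * (Real.log k) ^ γ) := by
      have h7 : (i : ℝ) ≤ i * ((B - C) * γ * Real.log (2 / (τ - 1)) * (Real.log k) ^ γ) :=
        le_mul_of_one_le_right (Nat.cast_nonneg i) hconst
      have h8 : (B - C) * ((1 + i * γ * Real.log (2 / (τ - 1))) * (Real.log k) ^ γ)
          = (B - C) * (Real.log k) ^ γ
            + i * ((B - C) * γ * Real.log (2 / (τ - 1)) * (Real.log k) ^ γ) := by ring
      rw [h8]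
      linarith
    linarith
  -- combine
  have hu0 : 0 ≤ (B - C) * (Real.log k) ^ γ :=
    mul_nonneg hBCpos.le (Real.rpow_nonneg hlogk.le _)
  have hfinal : Real.exp ((B - C) * (Real.log k) ^ γ) + i
      ≤ Real.exp ((B - C) * (Real.log k) ^ γ + i) := by
    rw [Real.exp_add]
    have h8 : (1:ℝ) + i ≤ Real.exp (i : ℝ) := by
      have := Real.add_one_le_exp (i : ℝ); linarith
    have h9 : 1 ≤ Real.exp ((B - C) * (Real.log k) ^ γ) := Real.one_le_exp hu0
    nlinarith
  refine hfinal.trans ?_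
  exact Real.exp_le_exp.mpr (hE2.trans hE1)

/-- For every `C > 0`, every `B > 2C` and every constant `c̃ > 0`, the sums
`S(k) := ∑_{i=0}^∞ exp(-c̃ · y_{i+1}^(2-τ-C(log y_{i+1})^(γ-1)) · y_i)` (computed from the
recursion started at `y 0 = k`) are finite for all sufficiently large `k`, and `S(k) → 0`
as `k → ∞`. -/
theorem stmt3 (τ γ : ℝ) (hτ : 2 < τ ∧ τ < 3) (hγ : 0 < γ ∧ γ < 1)
    (C B ctilde : ℝ) (hC : 0 < C) (hB : 2 * C < B) (hctilde : 0 < ctilde) :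
    (∀ᶠ k : ℝ in Filter.atTop,
      Summable (fun i : ℕ =>
        Real.exp (-(ctilde *
          (ySeq τ γ B k (i + 1)) ^
            (2 - τ - C * (Real.log (ySeq τ γ B k (i + 1))) ^ (γ - 1)) *
          ySeq τ γ B k i)))) ∧
    Filter.Tendsto (fun k : ℝ => ∑' i : ℕ,
        Real.exp (-(ctilde *
          (ySeq τ γ B k (i + 1)) ^
            (2 - τ - C * (Real.log (ySeq τ γ B k (i + 1))) ^ (γ - 1)) *
          ySeq τ γ B k i)))
      Filter.atTop (nhds 0) := by
  obtain ⟨hτ1, hτ2⟩ := hτ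
  obtain ⟨hγ1, hγ2⟩ := hγ
  have hBC : C < B := by linarith
  have hρ : 1 < 2 / (τ - 1) := by rw [lt_div_iff₀ (by linarith)]; linarith
  have hlogρ : 0 < Real.log (2 / (τ - 1)) := Real.log_pos hρ
  -- choose M
  have hevM : ∀ᶠ M : ℝ in atTop, 1 ≤ M ∧ B * M ^ (γ - 1) ≤ (3 - τ) / 2 ∧
      1 ≤ (B - C) * γ * Real.log (2 / (τ - 1)) * M ^ γ := by
    have h1 : Tendsto (fun M : ℝ => B * M ^ (γ - 1)) atTop (nhds 0) := by
      have h := (tendsto_rpow_neg_atTop (show (0:ℝ) < 1 - γ by linarith)).const_mul B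
      simpa [neg_sub] using h
    have h1' : ∀ᶠ M : ℝ in atTop, B * M ^ (γ - 1) ≤ (3 - τ) / 2 := by
      have : ∀ᶠ M : ℝ in atTop, B * M ^ (γ - 1) < (3 - τ) / 2 :=
        h1.eventually (eventually_lt_nhds (by linarith))
      exact this.mono fun M h => h.le
    have h2 : Tendsto (fun M : ℝ => (B - C) * γ * Real.log (2 / (τ - 1)) * M ^ γ)
        atTop atTop :=
      (tendsto_rpow_atTop hγ1).const_mul_atTop (mul_pos (mul_pos (by linarith : (0:ℝ) < B - C) hγ1) hlogρ)
    exact (eventually_ge_atTop 1).and (h1'.and (h2.eventually_ge_atTop 1))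
  obtain ⟨M, hM1, hMε, hM2⟩ := hevM.exists
  have hevk : ∀ᶠ k : ℝ in atTop, M ≤ Real.log k ∧ 1 < k :=
    (Real.tendsto_log_atTop.eventually_ge_atTop M).and (eventually_gt_atTop 1)
  set r := Real.exp (-ctilde) with hrdef
  have hr0 : 0 ≤ r := (Real.exp_pos _).le
  have hr1 : r < 1 := Real.exp_lt_one_iff.mpr (by linarith)
  -- per-k term bound
  have hbound : ∀ k : ℝ, M ≤ Real.log k → 1 < k → ∀ i : ℕ,
      Real.exp (-(ctilde *
        (ySeq τ γ B k (i + 1)) ^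
          (2 - τ - C * (Real.log (ySeq τ γ B k (i + 1))) ^ (γ - 1)) *
        ySeq τ γ B k i))
      ≤ Real.exp (-(ctilde * Real.exp ((B - C) * (Real.log k) ^ γ))) * r ^ i := by
    intro k hk hk1 i
    have hkey := keybound τ γ C B M k hτ1 hτ2 hγ1 hγ2 hC hBC hM1 hMε hM2 hk hk1 i
    have h1 : -(ctilde *
        (ySeq τ γ B k (i + 1)) ^
          (2 - τ - C * (Real.log (ySeq τ γ B k (i + 1))) ^ (γ - 1)) *
        ySeq τ γ B k i)
        ≤ -(ctilde * (Real.exp ((B - C) * (Real.log k) ^ γ) + i)) := by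
      have := mul_le_mul_of_nonneg_left hkey hctilde.le
      nlinarith
    refine (Real.exp_le_exp.mpr h1).trans_eq ?_
    rw [hrdef, ← Real.exp_nat_mul, ← Real.exp_add]
    congr 1
    ring
  have hsummaj : Summable (fun i : ℕ =>
      Real.exp (-(ctilde * Real.exp ((B - C) * (Real.log M) ^ γ))) * r ^ i) :=
    (summable_geometric_of_lt_one hr0 hr1).mul_left _
  constructor
  · refine hevk.mono fun k hk => ?_
    refine Summable.of_nonneg_of_le (fun i => (Real.exp_pos _).le)
      (hbound k hk.1 hk.2) ?_
    exact (summable_geometric_of_lt_one hr0 hr1).mul_left _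
  · -- squeeze
    apply squeeze_zero' (g := fun k : ℝ =>
      Real.exp (-(ctilde * Real.exp ((B - C) * (Real.log k) ^ γ))) * (1 - r)⁻¹)
    · exact Eventually.of_forall fun k => tsum_nonneg fun i => (Real.exp_pos _).le
    · refine hevk.mono fun k hk => ?_
      have hsum : Summable (fun i : ℕ =>
          Real.exp (-(ctilde *
            (ySeq τ γ B k (i + 1)) ^
              (2 - τ - C * (Real.log (ySeq τ γ B k (i + 1))) ^ (γ - 1)) *
            ySeq τ γ B k i))) :=
        Summable.of_nonneg_of_le (fun i => (Real.exp_pos _).le)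
          (hbound k hk.1 hk.2) ((summable_geometric_of_lt_one hr0 hr1).mul_left _)
      calc ∑' i : ℕ, Real.exp (-(ctilde *
            (ySeq τ γ B k (i + 1)) ^
              (2 - τ - C * (Real.log (ySeq τ γ B k (i + 1))) ^ (γ - 1)) *
            ySeq τ γ B k i))
          ≤ ∑' i : ℕ, Real.exp (-(ctilde * Real.exp ((B - C) * (Real.log k) ^ γ))) * r ^ i :=
            Summable.tsum_le_tsum (hbound k hk.1 hk.2) hsum
              ((summable_geometric_of_lt_one hr0 hr1).mul_left _)
        _ = Real.exp (-(ctilde * Real.exp ((B - C) * (Real.log k) ^ γ))) * (1 - r)⁻¹ := by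
            rw [tsum_mul_left, tsum_geometric_of_lt_one hr0 hr1]
    · have h1 : Tendsto (fun k : ℝ => (B - C) * (Real.log k) ^ γ) atTop atTop :=
        Tendsto.const_mul_atTop (by linarith)
          ((tendsto_rpow_atTop hγ1).comp Real.tendsto_log_atTop)
      have h2 : Tendsto (fun k : ℝ => ctilde * Real.exp ((B - C) * (Real.log k) ^ γ))
          atTop atTop :=
        Tendsto.const_mul_atTop hctilde (Real.tendsto_exp_atTop.comp h1)
      have h3 : Tendsto (fun k : ℝ => -(ctilde * Real.exp ((B - C) * (Real.log k) ^ γ)))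
          atTop atBot := tendsto_neg_atTop_atBot.comp h2
      have h4 : Tendsto (fun k : ℝ =>
          Real.exp (-(ctilde * Real.exp ((B - C) * (Real.log k) ^ γ))))
          atTop (nhds 0) := Real.tendsto_exp_atBot.comp h3
      have h5 := h4.mul_const (1 - r)⁻¹
      simpa using h5
end

section
/- For every δ ∈ (0,1) there exists k₀ such that whenever y₀ = k ≥ k₀, the recursively defined sequence satisfies y_i ≥ (k^{1−δ})^{(τ−2)^{−i}} for all i ≥ 0. -/
open Real

/-- For every `δ ∈ (0,1)` there exists `k₀` such that whenever `y 0 = k ≥ k₀`,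
the recursively defined sequence `y (i+1) = y i ^ (1 / (τ - 2 + B * (log (y i)) ^ (γ - 1)))`
satisfies `y i ≥ (k^(1-δ))^((τ-2)^(-i))` for all `i ≥ 0`. -/
theorem stmt5 (τ γ B : ℝ) (hτ : 2 < τ ∧ τ < 3) (hγ : 0 < γ ∧ γ < 1) (hB : 0 < B)
    (δ : ℝ) (hδ : 0 < δ ∧ δ < 1) :
    ∃ k₀ : ℝ, 1 < k₀ ∧ ∀ k : ℝ, k₀ ≤ k →
      ∀ y : ℕ → ℝ, y 0 = k →
        (∀ i : ℕ, y (i + 1) = (y i) ^ (1 / (τ - 2 + B * (Real.log (y i)) ^ (γ - 1)))) →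
        ∀ i : ℕ, (k ^ (1 - δ)) ^ ((τ - 2)⁻¹ ^ i) ≤ y i := by
  obtain ⟨hτ2, hτ3⟩ := hτ
  obtain ⟨hγ0, hγ1⟩ := hγ
  obtain ⟨hδ0, hδ1⟩ := hδ
  set t := τ - 2 with htdef
  have ht0 : 0 < t := by rw [htdef]; linarith
  have ht1 : t < 1 := by rw [htdef]; linarith
  have hti : 0 < t⁻¹ := inv_pos.mpr ht0
  have hγ1' : γ - 1 < 0 := by linarith
  set q := t⁻¹ ^ (γ - 1) with hqdef
  clear_value t
  have hq0 : 0 < q := Real.rpow_pos_of_pos hti _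
  have hq1 : q < 1 := Real.rpow_lt_one_of_one_lt_of_neg ((one_lt_inv₀ ht0).mpr ht1) hγ1'
  have h1q : 0 < 1 - q := by linarith
  set X := δ * t * (1 - q) / B with hXdef
  clear_value q
  have hX : 0 < X := by rw [hXdef]; positivity
  set M := X ^ (γ - 1)⁻¹ with hMdef
  clear_value X
  have hM : 0 < M := by rw [hMdef]; exact Real.rpow_pos_of_pos hX _
  set L := max 1 (M / (1 - δ)) with hLdef
  clear_value M
  have hL1 : (1:ℝ) ≤ L := by rw [hLdef]; exact le_max_left _ _
  have hL0 : 0 < L := by linarith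
  have hML : M ≤ (1 - δ) * L := by
    have h := hLdef ▸ le_max_right 1 (M / (1 - δ))
    rw [div_le_iff₀ (by linarith : (0:ℝ) < 1 - δ)] at h
    linarith [h]
  have h1δL : 0 < (1 - δ) * L := mul_pos (by linarith) hL0
  set c := B / t * ((1 - δ) * L) ^ (γ - 1) with hcdef
  clear_value L
  have hc0 : 0 < c := by
    rw [hcdef]
    exact mul_pos (div_pos hB ht0) (Real.rpow_pos_of_pos h1δL _)
  clear_value c
  have hcq : c ≤ δ * (1 - q) := by
    have h1 : ((1 - δ) * L) ^ (γ - 1) ≤ M ^ (γ - 1) :=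
      Real.rpow_le_rpow_of_nonpos hM hML hγ1'.le
    have h2 : M ^ (γ - 1) = X := by
      rw [hMdef]; exact Real.rpow_inv_rpow hX.le (by intro h; linarith [h ▸ hγ1'] : γ - 1 ≠ 0)
    have h3 : B / t * X = δ * (1 - q) := by
      rw [hXdef]; field_simp
    calc c ≤ B / t * M ^ (γ - 1) := by
            rw [hcdef]
            exact mul_le_mul_of_nonneg_left h1 (le_of_lt (div_pos hB ht0))
      _ = δ * (1 - q) := by rw [h2, h3]
  have hcδ : c ≤ δ := by
    have h : δ * (1 - q) = δ - δ * q := by ring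
    have h2 : 0 < δ * q := mul_pos hδ0 hq0
    linarith [hcq, h ▸ hcq]
  refine ⟨Real.exp L, ?_, ?_⟩
  · calc (1:ℝ) = Real.exp 0 := (Real.exp_zero).symm
      _ < Real.exp L := Real.exp_lt_exp.mpr hL0
  intro k hk y hy0 hrec
  have hk1 : 1 < k := lt_of_lt_of_le (by
    calc (1:ℝ) = Real.exp 0 := (Real.exp_zero).symm
      _ < Real.exp L := Real.exp_lt_exp.mpr hL0) hk
  have hk0 : 0 < k := by linarith
  set a0 := Real.log k with ha0def
  clear_value a0
  have ha0 : L ≤ a0 := by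
    rw [ha0def, ← Real.log_exp L]
    exact Real.log_le_log (Real.exp_pos L) hk
  have ha0pos : 0 < a0 := lt_of_lt_of_le hL0 ha0
  have key : ∀ i : ℕ, 0 < y i ∧
      (1 - c * (1 - q ^ i) / (1 - q)) * a0 * (t⁻¹) ^ i ≤ Real.log (y i) := by
    intro i
    induction i with
    | zero => 
      refine ⟨by rw [hy0]; exact hk0, ?_⟩
      simp [hy0, ha0def]
    | succ i ih =>
      obtain ⟨hyi, hlog⟩ := ih
      have hqi0 : (0:ℝ) < q ^ i := pow_pos hq0 i
      have hqi1 : q ^ i ≤ 1 := pow_le_one₀ hq0.le hq1.le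
      have hri : (0:ℝ) < (t⁻¹) ^ i := pow_pos hti i
      have hSnn : 0 ≤ c * (1 - q ^ i) / (1 - q) := by
        apply div_nonneg (mul_nonneg hc0.le (by linarith)) h1q.le
      have hSle : c * (1 - q ^ i) / (1 - q) ≤ δ := by
        rw [div_le_iff₀ h1q]
        have e1 : c * (1 - q ^ i) = c - c * q ^ i := by ring
        have e2 : δ * (1 - q) = δ - δ * q := by ring
        have h2 : 0 ≤ c * q ^ i := mul_nonneg hc0.le hqi0.le
        have h3 : 0 < δ * q := mul_pos hδ0 hq0
        linarith
      have hAle : (1 - δ) * a0 * (t⁻¹) ^ i ≤ Real.log (y i) := by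
        refine le_trans ?_ hlog
        have h1 : (1:ℝ) - δ ≤ 1 - c * (1 - q ^ i) / (1 - q) := by linarith
        have h2 := mul_le_mul_of_nonneg_right h1 (le_of_lt (mul_pos ha0pos hri))
        calc (1 - δ) * a0 * (t⁻¹) ^ i = (1 - δ) * (a0 * (t⁻¹) ^ i) := by ring
          _ ≤ (1 - c * (1 - q ^ i) / (1 - q)) * (a0 * (t⁻¹) ^ i) := h2
          _ = (1 - c * (1 - q ^ i) / (1 - q)) * a0 * (t⁻¹) ^ i := by ring
      have hA : 0 < (1 - δ) * a0 * (t⁻¹) ^ i :=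
        mul_pos (mul_pos (by linarith) ha0pos) hri
      have hapos : 0 < Real.log (y i) := lt_of_lt_of_le hA hAle
      set a := Real.log (y i) with hadef
      have hεpos : 0 < B * a ^ (γ - 1) := mul_pos hB (Real.rpow_pos_of_pos hapos _)
      set ε := B * a ^ (γ - 1) with hεdef
      have hd : 0 < t + ε := by linarith
      have hy1 : 0 < y (i + 1) := by
        rw [hrec i]; exact Real.rpow_pos_of_pos hyi _
      refine ⟨hy1, ?_⟩
      have hlog1 : Real.log (y (i + 1)) = 1 / (t + ε) * a := by
        rw [hrec i, Real.log_rpow hyi]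
      have hriq : ((t⁻¹) ^ i : ℝ) ^ (γ - 1) = q ^ i := by
        rw [← Real.rpow_natCast t⁻¹ i, ← Real.rpow_natCast q i, hqdef,
          ← Real.rpow_mul hti.le, ← Real.rpow_mul hti.le, mul_comm]
      have hpow : a ^ (γ - 1) ≤ ((1 - δ) * L) ^ (γ - 1) * q ^ i := by
        have h1 : a ^ (γ - 1) ≤ ((1 - δ) * a0 * (t⁻¹) ^ i) ^ (γ - 1) :=
          Real.rpow_le_rpow_of_nonpos hA hAle hγ1'.le
        have h2 : ((1 - δ) * a0 * (t⁻¹) ^ i) ^ (γ - 1)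
            = ((1 - δ) * a0) ^ (γ - 1) * ((t⁻¹) ^ i) ^ (γ - 1) :=
          Real.mul_rpow (mul_pos (by linarith : (0:ℝ) < 1 - δ) ha0pos).le hri.le
        have h3 : ((1 - δ) * a0) ^ (γ - 1) ≤ ((1 - δ) * L) ^ (γ - 1) :=
          Real.rpow_le_rpow_of_nonpos h1δL
            (mul_le_mul_of_nonneg_left ha0 (by linarith)) hγ1'.le
        calc a ^ (γ - 1) ≤ ((1 - δ) * a0) ^ (γ - 1) * ((t⁻¹) ^ i) ^ (γ - 1) := by
              rw [← h2]; exact h1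
          _ ≤ ((1 - δ) * L) ^ (γ - 1) * q ^ i := by
              rw [hriq]
              exact mul_le_mul_of_nonneg_right h3 hqi0.le
      have hεle : ε ≤ t * (c * q ^ i) := by
        have h : t * (c * q ^ i) = B * (((1 - δ) * L) ^ (γ - 1) * q ^ i) := by
          rw [hcdef]; field_simp
        rw [hεdef, h]
        exact mul_le_mul_of_nonneg_left hpow hB.le
      have hu0 : 0 ≤ c * q ^ i := mul_nonneg hc0.le hqi0.le
      have huδ : c * q ^ i ≤ δ := by
        calc c * q ^ i ≤ c * 1 := mul_le_mul_of_nonneg_left hqi1 hc0.le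
          _ = c := mul_one c
          _ ≤ δ := hcδ
      have hrec2 : (1 - c * q ^ i) * t⁻¹ ≤ 1 / (t + ε) := by
        rw [le_div_iff₀ hd, mul_assoc]
        have hkey : t⁻¹ * (t + ε) = 1 + ε / t := by field_simp
        rw [hkey]
        have hεt : ε / t ≤ c * q ^ i := by
          rw [div_le_iff₀ ht0]; linarith
        have hεt0 : 0 ≤ ε / t := div_nonneg hεpos.le ht0.le
        linarith [mul_nonneg hu0 hεt0, hεt]
      rw [hlog1]
      have step1 : (1 - c * q ^ i) * t⁻¹ * a ≤ 1 / (t + ε) * a :=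
        mul_le_mul_of_nonneg_right hrec2 hapos.le
      refine le_trans ?_ step1
      have hfac : 0 ≤ (1 - c * q ^ i) * t⁻¹ := by
        apply mul_nonneg (by linarith) hti.le
      have step2 : (1 - c * q ^ i) * t⁻¹ * ((1 - c * (1 - q ^ i) / (1 - q)) * a0 * (t⁻¹) ^ i)
          ≤ (1 - c * q ^ i) * t⁻¹ * a :=
        mul_le_mul_of_nonneg_left hlog hfac
      refine le_trans ?_ step2
      have hSsucc : c * (1 - q ^ (i + 1)) / (1 - q) = c * (1 - q ^ i) / (1 - q) + c * q ^ i := by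
        field_simp
        ring
      have halg : 1 - c * (1 - q ^ (i + 1)) / (1 - q)
          ≤ (1 - c * q ^ i) * (1 - c * (1 - q ^ i) / (1 - q)) := by
        rw [hSsucc]
        linarith [mul_nonneg hu0 hSnn]
      have hpos2 : (0:ℝ) ≤ a0 * (t⁻¹) ^ (i + 1) :=
        (mul_pos ha0pos (pow_pos hti _)).le
      calc (1 - c * (1 - q ^ (i + 1)) / (1 - q)) * a0 * (t⁻¹) ^ (i + 1)
          = (1 - c * (1 - q ^ (i + 1)) / (1 - q)) * (a0 * (t⁻¹) ^ (i + 1)) := by ring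
        _ ≤ ((1 - c * q ^ i) * (1 - c * (1 - q ^ i) / (1 - q))) * (a0 * (t⁻¹) ^ (i + 1)) :=
            mul_le_mul_of_nonneg_right halg hpos2
        _ = (1 - c * q ^ i) * t⁻¹ * ((1 - c * (1 - q ^ i) / (1 - q)) * a0 * (t⁻¹) ^ i) := by
            ring
  intro i
  obtain ⟨hyi, hlog⟩ := key i
  have hqi0 : (0:ℝ) < q ^ i := pow_pos hq0 i
  have hqi1 : q ^ i ≤ 1 := pow_le_one₀ hq0.le hq1.le
  have hri : (0:ℝ) < (t⁻¹) ^ i := pow_pos hti i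
  have hSle : c * (1 - q ^ i) / (1 - q) ≤ δ := by
    rw [div_le_iff₀ h1q]
    have e1 : c * (1 - q ^ i) = c - c * q ^ i := by ring
    have e2 : δ * (1 - q) = δ - δ * q := by ring
    have h2 : 0 ≤ c * q ^ i := mul_nonneg hc0.le hqi0.le
    have h3 : 0 < δ * q := mul_pos hδ0 hq0
    linarith
  have hAle : (1 - δ) * a0 * (t⁻¹) ^ i ≤ Real.log (y i) := by
    refine le_trans ?_ hlog
    have h1 : (1:ℝ) - δ ≤ 1 - c * (1 - q ^ i) / (1 - q) := by linarith
    have h2 := mul_le_mul_of_nonneg_right h1 (le_of_lt (mul_pos ha0pos hri))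
    calc (1 - δ) * a0 * (t⁻¹) ^ i = (1 - δ) * (a0 * (t⁻¹) ^ i) := by ring
      _ ≤ (1 - c * (1 - q ^ i) / (1 - q)) * (a0 * (t⁻¹) ^ i) := h2
      _ = (1 - c * (1 - q ^ i) / (1 - q)) * a0 * (t⁻¹) ^ i := by ring
  rw [← Real.rpow_mul hk0.le, Real.rpow_def_of_pos hk0, ← Real.exp_log hyi]
  apply Real.exp_le_exp.mpr
  calc Real.log k * ((1 - δ) * t⁻¹ ^ i) = (1 - δ) * a0 * (t⁻¹) ^ i := by
        rw [ha0def]; ring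
    _ ≤ Real.log (y i) := hAle
end

section
/- Let τ ∈ (2,3), α ∈ (τ−2, 1), γ := log α / log(τ−2) ∈ (0,1), and let f : (0,1) → [0,∞) be nondecreasing. Let C > 0, let k, δ be reals with k^{1−δ} > e, and set C′ := C·(log(k^{1−δ}))^{−γ}. Assume the explosiveness criterion ∫_0^ε f(e^{−C/y}) (1/y) dy < ∞ holds for some ε > 0. Then for every sequence (y_i)_{i≥0} of reals with y_i ≥ (k^{1−δ})^{(τ−2)^{−i}} for all i, the series ∑_{i=0}^∞ f( exp(−C′ (log y_i)^γ) ) converges. -/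
open MeasureTheory
open scoped ENNReal

lemma aux_summable (α : ℝ) (hα0 : 0 < α) (hα1 : α < 1) (f : ℝ → ℝ)
    (hmono : MonotoneOn f (Set.Ioo 0 1)) (hf0 : ∀ x ∈ Set.Ioo (0:ℝ) 1, 0 ≤ f x)
    (C : ℝ) (hC : 0 < C)
    (hint : ∃ ε : ℝ, 0 < ε ∧
      ∫⁻ y in Set.Ioo 0 ε, ENNReal.ofReal (f (Real.exp (-C / y)) * (1 / y)) < ⊤) :
    Summable (fun i : ℕ => f (Real.exp (-C / α ^ i))) := by
  obtain ⟨ε, hε, hI⟩ := hint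
  set F : ℝ → ℝ≥0∞ := fun y => ENNReal.ofReal (f (Real.exp (-C / y)) * (1 / y)) with hF
  set g : ℕ → ℝ := fun i => f (Real.exp (-C / α ^ i)) with hg
  -- membership of arguments
  have hmem : ∀ i : ℕ, Real.exp (-C / α ^ i) ∈ Set.Ioo (0:ℝ) 1 := by
    intro i
    have hpow : 0 < α ^ i := pow_pos hα0 i
    refine ⟨Real.exp_pos _, ?_⟩
    rw [Real.exp_lt_one_iff, neg_div]
    have : 0 < C / α ^ i := div_pos hC hpow
    linarith
  have hgnn : ∀ i, 0 ≤ g i := fun i => hf0 _ (hmem i)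
  -- choose N with α^N < ε
  obtain ⟨N, hN⟩ := exists_pow_lt_of_lt_one hε hα1
  -- key interval estimate
  have key : ∀ j : ℕ, ENNReal.ofReal (g (j+1) * (1 - α)) ≤
      ∫⁻ y in Set.Ioo (α ^ (j+1)) (α ^ j), F y := by
    intro j
    have hpj : 0 < α ^ j := pow_pos hα0 j
    have hpj1 : 0 < α ^ (j+1) := pow_pos hα0 (j+1)
    have hc : ENNReal.ofReal (g (j+1) * (1 - α)) =
        ENNReal.ofReal (g (j+1) * (α ^ j)⁻¹) * volume (Set.Ioo (α ^ (j+1)) (α ^ j)) := by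
      rw [Real.volume_Ioo,
        ← ENNReal.ofReal_mul (mul_nonneg (hgnn (j+1)) (by positivity))]
      congr 1
      rw [pow_succ]
      field_simp
    rw [hc]
    calc ENNReal.ofReal (g (j+1) * (α ^ j)⁻¹) * volume (Set.Ioo (α ^ (j+1)) (α ^ j))
        = ∫⁻ _ in Set.Ioo (α ^ (j+1)) (α ^ j), ENNReal.ofReal (g (j+1) * (α ^ j)⁻¹) := by
          rw [setLIntegral_const]
      _ ≤ ∫⁻ y in Set.Ioo (α ^ (j+1)) (α ^ j), F y := by
          apply setLIntegral_mono' measurableSet_Ioo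
          intro x hx
          apply ENNReal.ofReal_le_ofReal
          have hx0 : 0 < x := lt_trans hpj1 hx.1
          have hxmem : Real.exp (-C / x) ∈ Set.Ioo (0:ℝ) 1 := by
            refine ⟨Real.exp_pos _, ?_⟩
            rw [Real.exp_lt_one_iff, neg_div]
            have : 0 < C / x := div_pos hC hx0
            linarith
          have h1 : g (j+1) ≤ f (Real.exp (-C / x)) := by
            apply hmono (hmem (j+1)) hxmem
            apply Real.exp_le_exp.2
            rw [neg_div, neg_div, neg_le_neg_iff]
            exact div_le_div_of_nonneg_left hC.le hpj1 hx.1.le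
          have h2 : (α ^ j)⁻¹ ≤ 1 / x := by
            rw [one_div]
            exact inv_anti₀ hx0 hx.2.le
          exact mul_le_mul h1 h2 (by positivity) (hf0 _ hxmem)
  have hIne : (∫⁻ y in Set.Ioo 0 ε, F y) ≠ ⊤ := hI.ne
  have hdisj : ∀ a b : ℕ, a < b →
      Disjoint (Set.Ioo (α ^ (a+N+1)) (α ^ (a+N))) (Set.Ioo (α ^ (b+N+1)) (α ^ (b+N))) := by
    intro a b hab
    rw [Set.Ioo_disjoint_Ioo]
    have h : α ^ (b+N) ≤ α ^ (a+N+1) := pow_le_pow_of_le_one hα0.le hα1.le (by omega)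
    exact (min_le_right _ _).trans (h.trans (le_max_left _ _))
  -- partial sums bounded
  have hbound : ∀ n : ℕ, ∑ i ∈ Finset.range n, g (i + (N+1)) ≤
      (∫⁻ y in Set.Ioo 0 ε, F y).toReal / (1 - α) := by
    intro n
    rw [le_div_iff₀ (by linarith : (0:ℝ) < 1 - α), ← ENNReal.ofReal_le_iff_le_toReal hIne,
      Finset.sum_mul,
      ENNReal.ofReal_sum_of_nonneg (fun i _ => mul_nonneg (hgnn _) (by linarith))]
    calc ∑ i ∈ Finset.range n, ENNReal.ofReal (g (i + (N+1)) * (1 - α))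
        ≤ ∑ i ∈ Finset.range n, ∫⁻ y in Set.Ioo (α ^ (i+N+1)) (α ^ (i+N)), F y := by
          apply Finset.sum_le_sum
          intro i _
          have := key (i + N)
          simpa [add_assoc] using this
      _ = ∫⁻ y in ⋃ i ∈ Finset.range n, Set.Ioo (α ^ (i+N+1)) (α ^ (i+N)), F y := by
          rw [lintegral_biUnion_finset ?_ (fun _ _ => measurableSet_Ioo)]
          intro a _ b _ hab
          rcases hab.lt_or_gt with h | h
          · exact hdisj a b h
          · exact (hdisj b a h).symm
      _ ≤ ∫⁻ y in Set.Ioo 0 ε, F y := by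
          apply lintegral_mono_set
          apply Set.iUnion₂_subset
          intro i _
          intro x hx
          refine ⟨lt_trans (pow_pos hα0 _) hx.1, ?_⟩
          calc x < α ^ (i+N) := hx.2
            _ ≤ α ^ N := pow_le_pow_of_le_one hα0.le hα1.le (by omega)
            _ < ε := hN
  have hs : Summable (fun i => g (i + (N+1))) :=
    summable_of_sum_range_le (fun i => hgnn _) hbound
  exact (summable_nat_add_iff (N+1)).mp hs

/-- Let `τ ∈ (2,3)`, `α ∈ (τ-2, 1)`, `γ := log α / log(τ-2) ∈ (0,1)`, and let
`f : (0,1) → [0,∞)` be nondecreasing. Let `C > 0`, let `k, δ` be reals with `k^(1-δ) > e`,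
and set `C' := C·(log(k^(1-δ)))^(-γ)`. Assume `∫_0^ε f(e^(-C/y)) (1/y) dy < ∞` for some
`ε > 0`. Then for every sequence `(y i)` of reals with `y i ≥ (k^(1-δ))^((τ-2)^(-i))` for
all `i`, the series `∑_{i=0}^∞ f(exp(-C'·(log (y i))^γ))` converges. -/
theorem stmt14 (τ α : ℝ) (hτ : 2 < τ ∧ τ < 3) (hα : τ - 2 < α ∧ α < 1)
    (f : ℝ → ℝ) (hmono : MonotoneOn f (Set.Ioo 0 1))
    (hf0 : ∀ x ∈ Set.Ioo (0 : ℝ) 1, 0 ≤ f x)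
    (C k δ : ℝ) (hC : 0 < C) (hk : Real.exp 1 < k ^ (1 - δ))
    (hint : ∃ ε : ℝ, 0 < ε ∧
      ∫⁻ y in Set.Ioo 0 ε, ENNReal.ofReal (f (Real.exp (-C / y)) * (1 / y)) < ⊤)
    (y : ℕ → ℝ) (hy : ∀ i : ℕ, (k ^ (1 - δ)) ^ ((τ - 2)⁻¹ ^ i) ≤ y i) :
    Summable (fun i : ℕ =>
      f (Real.exp (-((C * (Real.log (k ^ (1 - δ))) ^ (-(Real.log α / Real.log (τ - 2)))) *
        (Real.log (y i)) ^ (Real.log α / Real.log (τ - 2)))))) := by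
  set β : ℝ := τ - 2 with hβdef
  set K : ℝ := k ^ (1 - δ) with hKdef
  set γ : ℝ := Real.log α / Real.log β with hγdef
  have hβ0 : 0 < β := by simp only [hβdef]; linarith [hτ.1]
  have hβ1 : β < 1 := by simp only [hβdef]; linarith [hτ.2]
  have hα0 : 0 < α := lt_trans hβ0 hα.1
  have hα1 : α < 1 := hα.2
  have hK0 : 0 < K := lt_trans (Real.exp_pos 1) hk
  have hK1 : 1 < K := lt_trans (by simpa using Real.one_lt_exp_iff_of_nonneg le_rfl |>.2 one_pos) hk
  have hlogK : 0 < Real.log K := Real.log_pos hK1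
  have hlogβ : Real.log β ≠ 0 := (Real.log_neg hβ0 hβ1).ne
  have hγ0 : 0 < γ := by
    rw [hγdef]
    exact div_pos_of_neg_of_neg (Real.log_neg hα0 hα1) (Real.log_neg hβ0 hβ1)
  have hβγ : β ^ γ = α := by
    have h : Real.log β * γ = Real.log α := by rw [hγdef]; field_simp
    rw [Real.rpow_def_of_pos hβ0, h, Real.exp_log hα0]
  have hkey : ∀ i : ℕ, C / α ^ i ≤
      (C * (Real.log K) ^ (-γ)) * (Real.log (y i)) ^ γ := by
    intro i
    have hβi : (0:ℝ) < β⁻¹ ^ i := pow_pos (inv_pos.2 hβ0) i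
    have hb : 0 < β⁻¹ ^ i * Real.log K := mul_pos hβi hlogK
    have hlogy : β⁻¹ ^ i * Real.log K ≤ Real.log (y i) := by
      calc β⁻¹ ^ i * Real.log K = Real.log (K ^ (β⁻¹ ^ i)) := (Real.log_rpow hK0 _).symm
        _ ≤ Real.log (y i) := Real.log_le_log (Real.rpow_pos_of_pos hK0 _) (hy i)
    have h1 : (β⁻¹ ^ i * Real.log K) ^ γ ≤ (Real.log (y i)) ^ γ :=
      Real.rpow_le_rpow hb.le hlogy hγ0.le
    have hpow : ((β ^ i : ℝ)) ^ γ = α ^ i := by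
      rw [← Real.rpow_natCast β i, ← Real.rpow_mul hβ0.le, mul_comm,
        Real.rpow_mul hβ0.le, hβγ, Real.rpow_natCast]
    have h2 : (β⁻¹ ^ i * Real.log K : ℝ) ^ γ = (α ^ i)⁻¹ * (Real.log K) ^ γ := by
      rw [Real.mul_rpow hβi.le hlogK.le]
      congr 1
      rw [inv_pow, Real.inv_rpow (pow_pos hβ0 i).le, hpow]
    have hcancel : Real.log K ^ (-γ) * Real.log K ^ γ = 1 := by
      rw [← Real.rpow_add hlogK, neg_add_cancel, Real.rpow_zero]
    have h3 : (C * (Real.log K) ^ (-γ)) * ((α ^ i)⁻¹ * (Real.log K) ^ γ) = C / α ^ i := by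
      calc (C * (Real.log K) ^ (-γ)) * ((α ^ i)⁻¹ * (Real.log K) ^ γ)
          = C * (α ^ i)⁻¹ * (Real.log K ^ (-γ) * Real.log K ^ γ) := by ring
        _ = C / α ^ i := by rw [hcancel, mul_one, div_eq_mul_inv]
    calc C / α ^ i = (C * (Real.log K) ^ (-γ)) * ((α ^ i)⁻¹ * (Real.log K) ^ γ) := h3.symm
      _ = (C * (Real.log K) ^ (-γ)) * ((β⁻¹ ^ i * Real.log K) ^ γ) := by rw [h2]
      _ ≤ (C * (Real.log K) ^ (-γ)) * (Real.log (y i)) ^ γ := by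
          apply mul_le_mul_of_nonneg_left h1
          positivity
  have hmem1 : ∀ i : ℕ, Real.exp (-((C * (Real.log K) ^ (-γ)) * (Real.log (y i)) ^ γ))
      ∈ Set.Ioo (0:ℝ) 1 := by
    intro i
    refine ⟨Real.exp_pos _, ?_⟩
    rw [Real.exp_lt_one_iff]
    have h := hkey i
    have hp : 0 < C / α ^ i := div_pos hC (pow_pos hα0 i)
    linarith
  have hmem2 : ∀ i : ℕ, Real.exp (-C / α ^ i) ∈ Set.Ioo (0:ℝ) 1 := by
    intro i
    refine ⟨Real.exp_pos _, ?_⟩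
    rw [Real.exp_lt_one_iff, neg_div]
    have hp : 0 < C / α ^ i := div_pos hC (pow_pos hα0 i)
    linarith
  refine Summable.of_nonneg_of_le (fun i => hf0 _ (hmem1 i)) (fun i => ?_)
    (aux_summable α hα0 hα1 f hmono hf0 C hC hint)
  apply hmono (hmem1 i) (hmem2 i)
  apply Real.exp_le_exp.2
  rw [neg_div]
  have h := hkey i
  linarith
end

section
/- Let b, c > 0 and γ ∈ (0,1), and define y(x) := (2x/b)·exp( 2c (log(2x/b))^γ ) for x > 0. Then for all sufficiently large x, y(x) · b·exp( −c (log y(x))^γ ) ≥ 2x. -/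
/-- Let `b, c > 0` and `γ ∈ (0,1)`, and define
`y(x) := (2x/b)·exp(2c (log(2x/b))^γ)` for `x > 0`. Then for all sufficiently large `x`,
`y(x) · b·exp(-c (log y(x))^γ) ≥ 2x`. -/
theorem stmt15 (b c γ : ℝ) (hb : 0 < b) (hc : 0 < c) (hγ : 0 < γ ∧ γ < 1) :
    ∀ᶠ x : ℝ in Filter.atTop, ∀ y : ℝ,
      y = (2 * x / b) * Real.exp (2 * c * (Real.log (2 * x / b)) ^ γ) →
      2 * x ≤ y * (b * Real.exp (-c * (Real.log y) ^ γ)) := by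
  obtain ⟨hγ0, hγ1⟩ := hγ
  set M : ℝ := max 1 ((2 * c) ^ (1 / (1 - γ))) with hMdef
  have hM1 : (1 : ℝ) ≤ M := le_max_left _ _
  filter_upwards [Filter.eventually_ge_atTop (b / 2 * Real.exp M)] with x hx y hy
  have hexp : (0 : ℝ) < Real.exp M := Real.exp_pos M
  have hx0 : 0 < x := lt_of_lt_of_le (by positivity) hx
  have ht : Real.exp M ≤ 2 * x / b := by
    rw [le_div_iff₀ hb]; nlinarith
  have ht0 : 0 < 2 * x / b := lt_of_lt_of_le hexp ht
  set L : ℝ := Real.log (2 * x / b) with hLdef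
  have hL : M ≤ L := (Real.le_log_iff_exp_le ht0).mpr ht
  have hL1 : (1 : ℝ) ≤ L := le_trans hM1 hL
  have hL0 : (0 : ℝ) < L := lt_of_lt_of_le one_pos hL1
  -- 2c ≤ L^(1-γ)
  have hγne : (1 : ℝ) - γ ≠ 0 := by linarith
  have h2c : 2 * c ≤ L ^ (1 - γ) := by
    have h1 : (2 * c) ^ (1 / (1 - γ)) ≤ L := le_trans (le_max_right _ _) hL
    have h2 : ((2 * c) ^ (1 / (1 - γ))) ^ (1 - γ) ≤ L ^ (1 - γ) :=
      Real.rpow_le_rpow (by positivity) h1 (by linarith)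
    calc 2 * c = ((2 * c) ^ (1 / (1 - γ))) ^ (1 - γ) := by
          rw [← Real.rpow_mul (by positivity), one_div, inv_mul_cancel₀ hγne, Real.rpow_one]
      _ ≤ L ^ (1 - γ) := h2
  have hkey : 2 * c * L ^ γ ≤ L := by
    have := mul_le_mul_of_nonneg_right h2c (Real.rpow_nonneg hL0.le γ)
    calc 2 * c * L ^ γ ≤ L ^ (1 - γ) * L ^ γ := this
      _ = L := by rw [← Real.rpow_add hL0]; norm_num
  have hlogy : Real.log y = L + 2 * c * L ^ γ := by
    rw [hy, Real.log_mul (ne_of_gt ht0) (Real.exp_ne_zero _), Real.log_exp]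
  have hlogy_nonneg : 0 ≤ Real.log y := by
    rw [hlogy]; positivity
  have hlogy_le : Real.log y ≤ 2 * L := by rw [hlogy]; linarith
  have hpow : (Real.log y) ^ γ ≤ 2 * L ^ γ := by
    calc (Real.log y) ^ γ ≤ (2 * L) ^ γ := Real.rpow_le_rpow hlogy_nonneg hlogy_le hγ0.le
      _ = 2 ^ γ * L ^ γ := Real.mul_rpow (by norm_num) hL0.le
      _ ≤ 2 * L ^ γ := by
          have : (2:ℝ) ^ γ ≤ 2 ^ (1:ℝ) :=
            Real.rpow_le_rpow_of_exponent_le (by norm_num) (by linarith)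
          rw [Real.rpow_one] at this
          exact mul_le_mul_of_nonneg_right this (Real.rpow_nonneg hL0.le γ)
  have hexpo : 0 ≤ 2 * c * L ^ γ + (-c * (Real.log y) ^ γ) := by nlinarith
  have heq : y * (b * Real.exp (-c * (Real.log y) ^ γ))
      = 2 * x * Real.exp (2 * c * L ^ γ + (-c * (Real.log y) ^ γ)) := by
    rw [hy, Real.exp_add]; field_simp
  rw [heq]
  nlinarith [Real.one_le_exp hexpo, Real.exp_pos (2 * c * L ^ γ + (-c * (Real.log y) ^ γ))]
end

section
/- Let τ ∈ (2,3), γ ∈ (0,1), C > 0, b, c > 0 and x₀ ≥ 2. Let μ be a probability mass function on ℕ such that μ({ y ∈ ℕ : y > x }) ≥ x^{ −(τ−1) − C(log x)^{γ−1} } for all real x ≥ x₀. Let p : ℕ → [0,1] be nonincreasing with p(d) ≥ b·exp( −c (log d)^γ ) for all d ≥ 2. Let ν be the probability mass function on ℕ obtained as the mixture ν := μ.bind( d ↦ Binomial(d, p(d)) ), i.e. ν(m) = ∑_d μ(d)·P(Bin(d, p(d)) = m). Then there exist C′ > 0 and x₁ such that for all real x ≥ x₁: ν({ y ∈ ℕ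 : y > x }) ≥ x^{−(τ−1)} · exp( −C′ (log x)^γ ). -/
open Real Filter
open scoped ENNReal NNReal

lemma binom_tail_half (d N : ℕ) (q : ℝ) (h0 : 0 ≤ q) (h1 : q ≤ 1)
    (hdN : N ≤ d)
    (hcond : (N:ℝ) * Real.log d + Real.log (2*(N+1)) ≤ q * ((d:ℝ) - N)) :
    (2:ℝ≥0∞)⁻¹ ≤ ((PMF.binomial (Real.toNNReal q) (Real.toNNReal_le_one.mpr h1) d).map
      Fin.val).toMeasure {y : ℕ | N < y} := by
  classical
  have hd1 : 1 ≤ d := by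
    by_contra h
    push_neg at h
    interval_cases d
    · interval_cases N
      simp at hcond
      nlinarith [Real.log_pos (by norm_num : (1:ℝ) < 2)]
  set P := PMF.binomial (Real.toNNReal q) (Real.toNNReal_le_one.mpr h1) d with hP
  have hmeas : ∀ s : Set ℕ, MeasurableSet s := fun s => trivial
  rw [PMF.toMeasure_map_apply _ _ _ (measurable_of_countable _) (hmeas _)]
  set T : Set (Fin (d+1)) := Fin.val ⁻¹' {y : ℕ | N < y} with hT
  -- bound on complement
  have hM : P.toMeasure Tᶜ ≤ 2⁻¹ := by
    rw [PMF.toMeasure_apply (p := P) (MeasurableSet.of_discrete (s := Tᶜ)), tsum_fintype]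
    rw [Finset.sum_indicator_eq_sum_filter]
    set M : ℝ≥0∞ := ENNReal.ofReal ((d:ℝ)^N * (1-q)^(d-N)) with hMdef
    have hterm : ∀ k : Fin (d+1), (k:ℕ) ≤ N → P k ≤ M := by
      intro k hk
      have h1q' : (0:ℝ) ≤ 1 - q := by linarith
      rw [hP, PMF.binomial_apply]
      change ENNReal.ofReal q ^ (k:ℕ) * (1 - ENNReal.ofReal q) ^ _ * _ ≤ M
      have h1q : (1 : ℝ≥0∞) - ENNReal.ofReal q = ENNReal.ofReal (1 - q) := by
        rw [ENNReal.ofReal_sub _ h0, ENNReal.ofReal_one]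
      rw [h1q, ← ENNReal.ofReal_pow h0, ← ENNReal.ofReal_pow h1q',
        ← ENNReal.ofReal_natCast, ← ENNReal.ofReal_mul (pow_nonneg h0 _),
        ← ENNReal.ofReal_mul (mul_nonneg (pow_nonneg h0 _) (pow_nonneg h1q' _))]
      apply ENNReal.ofReal_le_ofReal
      simp only [Fin.val_last]
      have e1 : q ^ (k:ℕ) ≤ 1 := pow_le_one₀ h0 h1
      have e2 : (1-q) ^ (d - (k:ℕ)) ≤ (1-q)^(d-N) :=
        pow_le_pow_of_le_one h1q' (by linarith) (Nat.sub_le_sub_left hk d)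
      have e3 : (d.choose k : ℝ) ≤ (d:ℝ)^N := by
        calc (d.choose k : ℝ) ≤ ((d^(k:ℕ) : ℕ) : ℝ) := by
              exact_mod_cast Nat.choose_le_pow d k
          _ ≤ (d:ℝ)^N := by
              push_cast
              apply pow_le_pow_right₀ (by exact_mod_cast hd1) hk
      calc q ^ (k:ℕ) * (1-q) ^ (d - (k:ℕ)) * (d.choose k : ℝ)
          ≤ (1 * (1-q)^(d-N)) * (d:ℝ)^N :=
            mul_le_mul (mul_le_mul e1 e2 (pow_nonneg h1q' _) one_pos.le) e3
              (Nat.cast_nonneg _) (mul_nonneg one_pos.le (pow_nonneg h1q' _))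
        _ = (d:ℝ)^N * (1-q)^(d-N) := by ring
    have hsum : ∑ k ∈ Finset.univ.filter (fun k : Fin (d+1) => k ∈ Tᶜ), P k
        ≤ (N+1 : ℝ≥0∞) * M := by
      have hsub : ∀ k ∈ Finset.univ.filter (fun k : Fin (d+1) => k ∈ Tᶜ), P k ≤ M := by
        intro k hk
        simp only [Finset.mem_filter, Set.mem_compl_iff, hT, Set.mem_preimage,
          Set.mem_setOf_eq, not_lt] at hk
        exact hterm k hk.2
      calc ∑ k ∈ Finset.univ.filter (fun k : Fin (d+1) => k ∈ Tᶜ), P k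
          ≤ ∑ _k ∈ Finset.univ.filter (fun k : Fin (d+1) => k ∈ Tᶜ), M :=
            Finset.sum_le_sum hsub
        _ = (Finset.univ.filter (fun k : Fin (d+1) => k ∈ Tᶜ)).card * M := by
            rw [Finset.sum_const, nsmul_eq_mul]
        _ ≤ (N+1 : ℝ≥0∞) * M := by
            apply mul_le_mul_left
            have : (Finset.univ.filter (fun k : Fin (d+1) => k ∈ Tᶜ)).card ≤ N+1 := by
              have : (Finset.univ.filter (fun k : Fin (d+1) => k ∈ Tᶜ)).card
                  ≤ (Finset.range (N+1)).card := by
                apply Finset.card_le_card_of_injOn (fun k : Fin (d+1) => (k:ℕ))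
                · intro k hk
                  simp only [Finset.coe_filter, Finset.mem_filter, Set.mem_compl_iff, hT, Set.mem_preimage,
                    Set.mem_setOf_eq, not_lt] at hk
                  simp [Finset.mem_range]
                  omega
                · intro a _ b _ hab
                  exact Fin.ext hab
              simpa using this
            exact_mod_cast this
    refine hsum.trans ?_
    have hdpos : (0:ℝ) < d := by exact_mod_cast hd1
    have h1q' : (0:ℝ) ≤ 1 - q := by linarith
    have hR : ((N:ℝ)+1) * ((d:ℝ)^N * (1-q)^(d-N)) ≤ 1/2 := by
      have hm : ((d - N : ℕ) : ℝ) = (d:ℝ) - N := by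
        push_cast [Nat.cast_sub hdN]; ring
      have hA : (1-q)^(d-N) ≤ Real.exp (((d-N:ℕ):ℝ) * (-q)) := by
        rw [Real.exp_nat_mul]
        exact pow_le_pow_left₀ h1q' (by linarith [Real.add_one_le_exp (-q)]) _
      have hB : ((d-N:ℕ):ℝ) * (-q) ≤ -((N:ℝ) * Real.log d + Real.log (2*((N:ℝ)+1))) := by
        rw [hm]
        push_cast at hcond ⊢
        nlinarith [hcond]
      have hC : (1-q)^(d-N) ≤ Real.exp (-((N:ℝ) * Real.log d)) * (2*((N:ℝ)+1))⁻¹ := by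
        calc (1-q)^(d-N) ≤ Real.exp (-((N:ℝ) * Real.log d + Real.log (2*((N:ℝ)+1)))) :=
              hA.trans (Real.exp_le_exp.2 hB)
          _ = Real.exp (-((N:ℝ) * Real.log d)) * (2*((N:ℝ)+1))⁻¹ := by
              rw [neg_add, Real.exp_add, Real.exp_neg (Real.log (2*((N:ℝ)+1))),
                Real.exp_log (by positivity)]
      have hD : (d:ℝ)^N * Real.exp (-((N:ℝ) * Real.log d)) = 1 := by
        rw [Real.exp_neg, Real.exp_nat_mul, Real.exp_log hdpos]
        field_simp
      calc ((N:ℝ)+1) * ((d:ℝ)^N * (1-q)^(d-N))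
          ≤ ((N:ℝ)+1) * ((d:ℝ)^N * (Real.exp (-((N:ℝ) * Real.log d)) * (2*((N:ℝ)+1))⁻¹)) := by
            apply mul_le_mul_of_nonneg_left _ (by positivity)
            exact mul_le_mul_of_nonneg_left hC (by positivity)
        _ = ((d:ℝ)^N * Real.exp (-((N:ℝ) * Real.log d))) * (((N:ℝ)+1) * (2*((N:ℝ)+1))⁻¹) := by
            ring
        _ = 1/2 := by
            rw [hD, one_mul]
            rw [mul_inv, ← mul_assoc]
            rw [mul_comm ((N:ℝ)+1) (2:ℝ)⁻¹, mul_assoc,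
              mul_inv_cancel₀ (by positivity : ((N:ℝ)+1) ≠ 0)]
            norm_num
    calc ((N:ℝ≥0∞)+1) * M = ENNReal.ofReal (((N:ℝ)+1) * ((d:ℝ)^N * (1-q)^(d-N))) := by
          rw [ENNReal.ofReal_mul (by positivity)]
          congr 1
          rw [ENNReal.ofReal_add (Nat.cast_nonneg N) zero_le_one, ENNReal.ofReal_natCast,
            ENNReal.ofReal_one]
      _ ≤ ENNReal.ofReal (1/2) := ENNReal.ofReal_le_ofReal hR
      _ = 2⁻¹ := by
          rw [one_div, ENNReal.ofReal_inv_of_pos two_pos, ENNReal.ofReal_ofNat]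
  -- conclude
  have hprob : P.toMeasure Set.univ = 1 := by
    simp [PMF.toMeasure_apply_eq_one_iff]
  have hTc : P.toMeasure T = 1 - P.toMeasure Tᶜ := by
    have := MeasureTheory.prob_compl_eq_one_sub (μ := P.toMeasure) (MeasurableSet.of_discrete (s := Tᶜ))
    rw [compl_compl] at this
    exact this.symm ▸ rfl
  rw [hTc]
  have h12 : (2:ℝ≥0∞)⁻¹ = 1 - 2⁻¹ := by
    rw [ENNReal.one_sub_inv_two]
  rw [h12]
  exact tsub_le_tsub_left hM 1

set_option maxHeartbeats 4000000 in
lemma cond_helper (γ c b : ℝ) (hγ0 : 0 < γ) (hγ1 : γ < 1) (hb : 0 < b) (hc : 0 < c)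
    (p : ℕ → ℝ) (hp0 : ∀ d, 0 ≤ p d) (hpmono : Antitone p)
    (hplow : ∀ d : ℕ, 2 ≤ d → b * Real.exp (-c * (Real.log d) ^ γ) ≤ p d)
    (x : ℝ) (hx4 : 4 ≤ x) (hx3 : 256/b^2 ≤ x)
    (hx5 : Real.exp ((4*c)^(1/(1-γ))) ≤ x)
    (hE1 : Real.log (Real.log x) ≤ 2 * (Real.log x)^γ)
    (d : ℕ) (hdD : (12/b + 2) * x * Real.exp ((4*c+2) * (Real.log x)^γ) < d) :
    (⌊x⌋₊ : ℝ) * Real.log d + Real.log (2*((⌊x⌋₊ : ℝ)+1)) ≤ p d * ((d:ℝ) - ⌊x⌋₊) := by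
  have hx0 : (0:ℝ) < x := by linarith
  set L := Real.log x with hLdef
  have hL1 : 1 ≤ L := by
    rw [hLdef, Real.le_log_iff_exp_le hx0]
    nlinarith [Real.exp_one_lt_d9]
  have hLγ1 : 1 ≤ L ^ γ := Real.one_le_rpow hL1 hγ0.le
  have hLγ0 : (0:ℝ) ≤ L ^ γ := by linarith
  set N := ⌊x⌋₊ with hNdef
  have hNx : (N:ℝ) ≤ x := Nat.floor_le hx0.le
  have hN0 : (0:ℝ) ≤ N := Nat.cast_nonneg N
  set D := (12/b + 2) * x * Real.exp ((4*c+2) * L^γ) with hDdef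
  have hexp1 : 1 ≤ Real.exp ((4*c+2) * L^γ) := by
    rw [Real.one_le_exp_iff]
    positivity
  have hD2x : 2*x ≤ D := by
    rw [hDdef]
    have h2 : 2 ≤ 12/b + 2 := by
      have := div_pos (by norm_num : (0:ℝ) < 12) hb
      linarith
    calc 2*x = (2*x)*1 := by ring
      _ ≤ ((12/b+2)*x) * Real.exp ((4*c+2) * L^γ) := by
          apply mul_le_mul (by nlinarith) hexp1 (by norm_num) (by positivity)
  have hd2x : 2*x ≤ (d:ℝ) := by linarith [hdD, hD2x]
  have hdhalf : (d:ℝ)/2 ≤ (d:ℝ) - N := by linarith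
  have hd2 : 2 ≤ d := by
    have : (2:ℝ) ≤ (d:ℝ) := by linarith
    exact_mod_cast this
  have hdpos : (0:ℝ) < d := by linarith
  have hxd : x ≤ (d:ℝ) := by linarith
  have hLlogd : L ≤ Real.log d := Real.log_le_log hx0 hxd
  have hlogd0 : (0:ℝ) < Real.log d := by linarith
  have hq0 : 0 ≤ p d := hp0 d
  -- reduce to 4 x log d ≤ p d * d
  have hmain : 4 * x * Real.log d ≤ p d * d → 
      (N:ℝ) * Real.log d + Real.log (2*((N:ℝ)+1)) ≤ p d * ((d:ℝ) - N) := by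
    intro h
    have h1 : (N:ℝ) * Real.log d ≤ x * Real.log d :=
      mul_le_mul_of_nonneg_right hNx hlogd0.le
    have h2 : Real.log (2*((N:ℝ)+1)) ≤ x * Real.log d := by
      have e1 : 2*((N:ℝ)+1) ≤ x^2 := by nlinarith
      have e2 : Real.log (2*((N:ℝ)+1)) ≤ Real.log (x^2) :=
        Real.log_le_log (by positivity) e1
      have e3 : Real.log (x^2) = 2 * L := by
        rw [Real.log_pow]; push_cast; rw [hLdef]
      have e4 : 2 * L ≤ x * Real.log d := by nlinarith
      linarith
    have h3 : p d * ((d:ℝ)/2) ≤ p d * ((d:ℝ) - N) :=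
      mul_le_mul_of_nonneg_left hdhalf hq0
    linarith
  apply hmain
  rcases le_or_gt (d:ℝ) (x^3) with hdA | hdB
  -- Case A : d ≤ x^3
  · set M := ⌈x^3⌉₊ with hMdef
    have hMx : x^3 ≤ (M:ℝ) := Nat.le_ceil _
    have hdM : d ≤ M := by
      have : (d:ℝ) ≤ (M:ℝ) := le_trans hdA hMx
      exact_mod_cast this
    have hM2 : 2 ≤ M := by
      have : (2:ℝ) ≤ (M:ℝ) := by nlinarith
      exact_mod_cast this
    have hMub : (M:ℝ) ≤ 2*x^3 := by
      have := Nat.ceil_lt_add_one (by positivity : (0:ℝ) ≤ x^3)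
      have hx1 : 1 ≤ x^3 := by nlinarith
      linarith
    have hlogM : Real.log M ≤ 4 * L := by
      have e1 : Real.log M ≤ Real.log (2*x^3) := Real.log_le_log (by positivity) hMub
      have e2 : Real.log (2*x^3) = Real.log 2 + 3 * L := by
        rw [Real.log_mul (by norm_num) (by positivity), Real.log_pow]
        push_cast; rw [hLdef]
      have e3 : Real.log 2 ≤ L := by
        nlinarith [Real.log_two_lt_d9]
      linarith
    have hlogMγ : (Real.log M)^γ ≤ 4 * L^γ := by
      have e0 : (0:ℝ) ≤ Real.log M := Real.log_nonneg (by exact_mod_cast Nat.one_le_iff_ne_zero.mpr (by omega))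
      calc (Real.log M)^γ ≤ (4*L)^γ := Real.rpow_le_rpow e0 hlogM hγ0.le
        _ = (4:ℝ)^γ * L^γ := Real.mul_rpow (by norm_num) (by linarith)
        _ ≤ 4 * L^γ := by
            have : (4:ℝ)^γ ≤ (4:ℝ)^(1:ℝ) :=
              Real.rpow_le_rpow_of_exponent_le (by norm_num) hγ1.le
            rw [Real.rpow_one] at this
            nlinarith
    have hpd : b * Real.exp (-(4*c) * L^γ) ≤ p d := by
      have h1 : b * Real.exp (-c * (Real.log M)^γ) ≤ p M := hplow M hM2
      have h2 : p M ≤ p d := hpmono hdM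
      have h3 : Real.exp (-(4*c) * L^γ) ≤ Real.exp (-c * (Real.log M)^γ) := by
        apply Real.exp_le_exp.2
        nlinarith
      nlinarith [Real.exp_pos (-(4*c) * L^γ), h3, hb]
    have hDd : D ≤ (d:ℝ) := hdD.le
    have hpdd : (12 + 2*b) * x * Real.exp (2 * L^γ) ≤ p d * d := by
      have e1 : b * Real.exp (-(4*c) * L^γ) * D ≤ p d * d := by
        apply mul_le_mul hpd hDd (by positivity) hq0
      have e2 : b * Real.exp (-(4*c) * L^γ) * D = (12 + 2*b) * x * Real.exp (2 * L^γ) := by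
        rw [hDdef]
        rw [show b * Real.exp (-(4*c) * L^γ) * ((12/b + 2) * x * Real.exp ((4*c+2) * L^γ))
          = (b * (12/b + 2)) * x * (Real.exp (-(4*c) * L^γ) * Real.exp ((4*c+2) * L^γ)) by ring]
        rw [← Real.exp_add]
        have : -(4*c) * L^γ + (4*c+2) * L^γ = 2 * L^γ := by ring
        rw [this]
        field_simp
      linarith [e2 ▸ e1]
    have hlogd3 : Real.log d ≤ 3 * L := by
      have : Real.log d ≤ Real.log (x^3) := Real.log_le_log hdpos hdA
      rw [Real.log_pow] at this
      push_cast at this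
      linarith
    have hLexp : L ≤ Real.exp (2 * L^γ) := by
      calc L = Real.exp (Real.log L) := (Real.exp_log (by linarith)).symm
        _ ≤ Real.exp (2 * L^γ) := Real.exp_le_exp.2 hE1
    have s1 : 4 * x * Real.log d ≤ 12 * x * L := by
      nlinarith [mul_le_mul_of_nonneg_left hlogd3 (by linarith : (0:ℝ) ≤ 4*x)]
    have s2 : 12 * x * L ≤ 12 * x * Real.exp (2*L^γ) := by
      nlinarith [mul_le_mul_of_nonneg_left hLexp (by linarith : (0:ℝ) ≤ 12*x)]
    have s3 : 12 * x * Real.exp (2*L^γ) ≤ (12+2*b) * x * Real.exp (2*L^γ) := by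
      have : (0:ℝ) ≤ 2*b*x*Real.exp (2*L^γ) := by positivity
      nlinarith
    linarith
  -- Case B : x^3 < d
  · set u := Real.log d with hudef
    have hu3L : 3 * L ≤ u := by
      have : Real.log (x^3) ≤ u := Real.log_le_log (by positivity) hdB.le
      rw [Real.log_pow] at this
      push_cast at this
      linarith
    have hu1 : 1 ≤ u := by linarith
    have hu0 : 0 < u := by linarith
    have hL₀ : (4*c)^(1/(1-γ)) ≤ L := by
      rw [hLdef, Real.le_log_iff_exp_le hx0]
      exact hx5
    have h4c : 4*c ≤ u^(1-γ) := by
      have e1 : ((4*c)^(1/(1-γ)))^(1-γ) ≤ u^(1-γ) :=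
        Real.rpow_le_rpow (Real.rpow_nonneg (by positivity) _) (by linarith) (by linarith)
      have e2 : ((4*c)^(1/(1-γ)))^(1-γ) = 4*c := by
        rw [← Real.rpow_mul (by positivity)]
        rw [one_div_mul_cancel (by intro h; linarith [sub_eq_zero.mp h] : (1:ℝ)-γ ≠ 0)]
        exact Real.rpow_one _
      linarith [e2 ▸ e1]
    have hcu : c * u^γ ≤ u/4 := by
      have e1 : u^γ * u^(1-γ) = u := by
        rw [← Real.rpow_add hu0, show γ + (1-γ) = 1 by ring, Real.rpow_one]
      have e2 : (0:ℝ) ≤ u^γ := Real.rpow_nonneg hu0.le _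
      nlinarith [mul_le_mul_of_nonneg_right h4c e2]
    have hq : b * Real.exp (-(u/4)) ≤ p d := by
      have h1 := hplow d hd2
      have h2 : Real.exp (-(u/4)) ≤ Real.exp (-c * u^γ) := by
        apply Real.exp_le_exp.2; linarith
      have := mul_le_mul_of_nonneg_left h2 hb.le
      linarith
    have hrw : Real.exp (-(u/4)) = (d:ℝ) ^ (-(1/4) : ℝ) := by
      rw [Real.rpow_def_of_pos hdpos]
      congr 1
      rw [hudef]
      ring
    have hpd34 : b * (d:ℝ)^((3:ℝ)/4) ≤ p d * d := by
      have e1 : b * (d:ℝ)^(-(1/4):ℝ) * d ≤ p d * d := by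
        apply mul_le_mul_of_nonneg_right _ hdpos.le
        rw [← hrw]; exact hq
      have e0 : (d:ℝ)^(-(1/4):ℝ) * (d:ℝ)^((1:ℝ)) = (d:ℝ)^((3:ℝ)/4) := by
        rw [← Real.rpow_add hdpos]; norm_num
      have e2 : b * (d:ℝ)^(-(1/4):ℝ) * d = b * (d:ℝ)^((3:ℝ)/4) := by
        calc b * (d:ℝ)^(-(1/4):ℝ) * d = b * ((d:ℝ)^(-(1/4):ℝ) * (d:ℝ)^((1:ℝ))) := by
              rw [Real.rpow_one]; ring
          _ = b * (d:ℝ)^((3:ℝ)/4) := by rw [e0]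
      linarith [e2 ▸ e1]
    have hu4 : u ≤ 4 * (d:ℝ)^((1:ℝ)/4) := by
      have e1 : Real.log ((d:ℝ)^((1:ℝ)/4)) = (1/4) * u := Real.log_rpow hdpos _
      have e2 : Real.log ((d:ℝ)^((1:ℝ)/4)) ≤ (d:ℝ)^((1:ℝ)/4) - 1 :=
        Real.log_le_sub_one_of_pos (Real.rpow_pos_of_pos hdpos _)
      linarith
    have hd12 : 16 * x / b ≤ (d:ℝ)^((1:ℝ)/2) := by
      have e1 : (x ^ (3:ℕ) : ℝ) = x ^ ((3:ℝ)) := by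
        rw [← Real.rpow_natCast x 3]; norm_num
      have e2 : (x^(3:ℝ))^((1:ℝ)/2) ≤ (d:ℝ)^((1:ℝ)/2) := by
        apply Real.rpow_le_rpow (by positivity) _ (by norm_num)
        rw [← e1]; linarith
      have e3 : (x^(3:ℝ))^((1:ℝ)/2) = x * x^((1:ℝ)/2) := by
        rw [← Real.rpow_mul hx0.le]
        rw [show (3:ℝ) * (1/2) = 1 + 1/2 by norm_num, Real.rpow_add hx0, Real.rpow_one]
      have e4 : 16 / b ≤ x^((1:ℝ)/2) := by
        have f1 : ((16/b)^(2:ℝ))^((1:ℝ)/2) ≤ x^((1:ℝ)/2) := by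
          apply Real.rpow_le_rpow (Real.rpow_nonneg (by positivity) _) _ (by norm_num)
          rw [show ((16:ℝ)/b)^(2:ℝ) = ((16/b)^(2:ℕ) : ℝ) by rw [← Real.rpow_natCast (16/b) 2]; norm_num]
          calc ((16:ℝ)/b)^(2:ℕ) = 256/b^2 := by field_simp; ring
            _ ≤ x := hx3
        have f2 : ((16/b)^(2:ℝ))^((1:ℝ)/2) = 16/b := by
          rw [← Real.rpow_mul (by positivity)]
          norm_num
        linarith [f2 ▸ f1]
      have e5 : x * (16/b) ≤ x * x^((1:ℝ)/2) := by
        apply mul_le_mul_of_nonneg_left e4 hx0.le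
      calc 16 * x / b = x * (16/b) := by ring
        _ ≤ x * x^((1:ℝ)/2) := e5
        _ = (x^(3:ℝ))^((1:ℝ)/2) := e3.symm
        _ ≤ (d:ℝ)^((1:ℝ)/2) := e2
    have hd34 : (d:ℝ)^((3:ℝ)/4) = (d:ℝ)^((1:ℝ)/4) * (d:ℝ)^((1:ℝ)/2) := by
      rw [← Real.rpow_add hdpos]
      norm_num
    have hq14 : (0:ℝ) < (d:ℝ)^((1:ℝ)/4) := Real.rpow_pos_of_pos hdpos _
    -- 4 x u ≤ 16 x d^{1/4} ≤ b d^{1/4} d^{1/2} = b d^{3/4} ≤ p d * d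
    have step : 4 * x * u ≤ b * (d:ℝ)^((3:ℝ)/4) := by
      have s1 : 4 * x * u ≤ 16 * x * (d:ℝ)^((1:ℝ)/4) := by
        have := mul_le_mul_of_nonneg_left hu4 (by linarith : (0:ℝ) ≤ 4*x)
        nlinarith [this]
      have s2 : 16 * x * (d:ℝ)^((1:ℝ)/4) ≤ b * ((d:ℝ)^((1:ℝ)/4) * (d:ℝ)^((1:ℝ)/2)) := by
        have := mul_le_mul_of_nonneg_left hd12 (by positivity : (0:ℝ) ≤ b * (d:ℝ)^((1:ℝ)/4))
        calc 16 * x * (d:ℝ)^((1:ℝ)/4) = b * (d:ℝ)^((1:ℝ)/4) * (16 * x / b) := by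
              field_simp
          _ ≤ b * (d:ℝ)^((1:ℝ)/4) * (d:ℝ)^((1:ℝ)/2) := this
          _ = b * ((d:ℝ)^((1:ℝ)/4) * (d:ℝ)^((1:ℝ)/2)) := by ring
      rw [hd34]
      linarith
    linarith [hpd34]



set_option maxHeartbeats 2000000 in

/-- Let `τ ∈ (2,3)`, `γ ∈ (0,1)`, `C > 0`, `b, c > 0` and `x₀ ≥ 2`. Let `μ` be
a probability mass function on `ℕ` such that `μ {y : y > x} ≥ x^(-(τ-1) - C(log x)^(γ-1))`
for all real `x ≥ x₀`. Let `p : ℕ → [0,1]` be nonincreasing with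
`p d ≥ b·exp(-c (log d)^γ)` for all `d ≥ 2`. Let `ν := μ.bind (d ↦ Binomial(d, p d))` be the
mixture. Then there exist `C' > 0` and `x₁` such that for all real `x ≥ x₁`:
`ν {y : y > x} ≥ x^(-(τ-1))·exp(-C' (log x)^γ)`. -/
theorem stmt17 (τ γ C b c : ℝ) (hτ : 2 < τ ∧ τ < 3) (hγ : 0 < γ ∧ γ < 1)
    (hC : 0 < C) (hb : 0 < b) (hc : 0 < c) (x₀ : ℝ) (hx₀ : 2 ≤ x₀)
    (μ : PMF ℕ)
    (hμ : ∀ x : ℝ, x₀ ≤ x →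
      ENNReal.ofReal (x ^ (-(τ - 1) - C * (Real.log x) ^ (γ - 1))) ≤
        μ.toMeasure {y : ℕ | x < (y : ℝ)})
    (p : ℕ → ℝ) (hp0 : ∀ d : ℕ, 0 ≤ p d) (hp1 : ∀ d : ℕ, p d ≤ 1)
    (hpmono : Antitone p)
    (hplow : ∀ d : ℕ, 2 ≤ d → b * Real.exp (-c * (Real.log d) ^ γ) ≤ p d) :
    ∃ C' : ℝ, 0 < C' ∧ ∃ x₁ : ℝ, ∀ x : ℝ, x₁ ≤ x →
      ENNReal.ofReal (x ^ (-(τ - 1)) * Real.exp (-C' * (Real.log x) ^ γ)) ≤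
        (μ.bind (fun d =>
          (PMF.binomial (Real.toNNReal (p d)) (Real.toNNReal_le_one.mpr (hp1 d)) d).map
            (Fin.val))).toMeasure {y : ℕ | x < (y : ℝ)} := by
  obtain ⟨hτ2, hτ3⟩ := hτ
  obtain ⟨hγ0, hγ1⟩ := hγ
  have hBpos : (0:ℝ) < 12/b + 2 := by positivity
  set B : ℝ := 12/b + 2 with hBdef
  set K : ℝ := 4*c + 2 with hKdef
  set A1 : ℝ := 2*(|Real.log B| + K) with hA1def
  have hKpos : 0 < K := by rw [hKdef]; positivity
  have hA1pos : 0 < A1 := by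
    rw [hA1def]
    have : (0:ℝ) ≤ |Real.log B| := abs_nonneg _
    linarith
  clear_value B K A1
  refine ⟨A1 + 2*C + 1, by linarith, ?_⟩
  -- eventually facts
  have hyev : ∀ᶠ y : ℝ in atTop, Real.log y ≤ 2 * y ^ γ := by
    have h := (isLittleO_log_rpow_atTop hγ0).def (by norm_num : (0:ℝ) < 1)
    filter_upwards [h, eventually_ge_atTop (1:ℝ)] with y hy hy1
    have h2 : (0:ℝ) ≤ y ^ γ := Real.rpow_nonneg (by linarith) _
    rw [Real.norm_eq_abs, Real.norm_eq_abs, one_mul, abs_of_nonneg h2] at hy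
    calc Real.log y ≤ |Real.log y| := le_abs_self _
      _ ≤ y ^ γ := hy
      _ ≤ 2 * y ^ γ := by linarith
  have hE1ev : ∀ᶠ x : ℝ in atTop, Real.log (Real.log x) ≤ 2 * (Real.log x) ^ γ :=
    Real.tendsto_log_atTop.eventually hyev
  have hEBy : ∀ᶠ y : ℝ in atTop, Real.log B + K * y ^ γ ≤ y := by
    have h0 : Tendsto (fun y : ℝ => K * y ^ (γ-1)) atTop (nhds 0) := by
      have h1 := tendsto_rpow_neg_atTop (by linarith : (0:ℝ) < 1 - γ)
      have h' : (fun y:ℝ => y ^ (γ-1)) = fun y:ℝ => y ^ (-(1-γ)) := by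
        funext y; ring_nf
      have h2 : Tendsto (fun y : ℝ => y ^ (γ-1)) atTop (nhds 0) := by
        rw [h']; exact h1
      simpa using h2.const_mul K
    have h1 : ∀ᶠ y : ℝ in atTop, K * y ^ (γ-1) < 1/2 :=
      h0.eventually (gt_mem_nhds (by norm_num : (0:ℝ) < 1/2))
    filter_upwards [h1, eventually_ge_atTop (1:ℝ),
      eventually_ge_atTop (2*Real.log B + 2)] with y hy hy1 hyB
    have hy0 : (0:ℝ) < y := by linarith
    have e1 : y ^ γ = y ^ (γ-1) * y := by
      nth_rewrite 1 [show γ = γ-1+1 by ring]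
      rw [Real.rpow_add_one (ne_of_gt hy0)]
    have e2 : K * y ^ γ ≤ y/2 := by
      rw [e1, ← mul_assoc]
      calc K * y^(γ-1) * y ≤ (1/2) * y := mul_le_mul_of_nonneg_right hy.le hy0.le
        _ = y/2 := by ring
    have e3 : Real.log B ≤ y/2 - 1 := by linarith
    linarith [add_le_add e3 e2]
  have hEBev : ∀ᶠ x : ℝ in atTop, Real.log B + K * (Real.log x) ^ γ ≤ Real.log x :=
    Real.tendsto_log_atTop.eventually hEBy
  have main : ∀ᶠ x : ℝ in atTop,
      ENNReal.ofReal (x ^ (-(τ - 1)) * Real.exp (-(A1 + 2*C + 1) * (Real.log x) ^ γ)) ≤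
        (μ.bind (fun d =>
          (PMF.binomial (Real.toNNReal (p d)) (Real.toNNReal_le_one.mpr (hp1 d)) d).map
            (Fin.val))).toMeasure {y : ℕ | x < (y : ℝ)} := by
    filter_upwards [hE1ev, hEBev, eventually_ge_atTop x₀, eventually_ge_atTop (4:ℝ),
      eventually_ge_atTop (256/b^2), eventually_ge_atTop (Real.exp ((4*c)^(1/(1-γ))))]
      with x hE1 hEB hxx0 hx4 hx3 hx5
    have hx0 : (0:ℝ) < x := by linarith
    set L := Real.log x with hLdef
    have hL1 : 1 ≤ L := by
      rw [hLdef, Real.le_log_iff_exp_le hx0]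
      nlinarith [Real.exp_one_lt_d9]
    have hLγ1 : 1 ≤ L ^ γ := Real.one_le_rpow hL1 hγ0.le
    have hLγ0 : (0:ℝ) ≤ L ^ γ := by linarith
    set D := B * x * Real.exp (K * L^γ) with hDdef
    have hexp1 : 1 ≤ Real.exp (K * L^γ) := by
      rw [Real.one_le_exp_iff]
      positivity
    have hDpos : 0 < D := by rw [hDdef]; positivity
    have hDx : x ≤ D := by
      rw [hDdef]
      have hB1 : 1 ≤ B := by
        rw [hBdef]
        have : 0 < 12/b := by positivity
        linarith
      calc x = 1*x*1 := by ring
        _ ≤ B*x*Real.exp (K * L^γ) := by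
            apply mul_le_mul (by nlinarith) hexp1 (by norm_num) (by positivity)
    have hDx₀ : x₀ ≤ D := le_trans hxx0 hDx
    have hμD := hμ D hDx₀
    set t := τ - 1 with htdef
    clear_value L D t
    -- per-d tail bound
    have key : ∀ d : ℕ, D < (d:ℝ) →
        (2:ℝ≥0∞)⁻¹ ≤ ((PMF.binomial (Real.toNNReal (p d))
          (Real.toNNReal_le_one.mpr (hp1 d)) d).map Fin.val).toMeasure
            {y : ℕ | x < (y:ℝ)} := by
      intro d hd
      have hd' : (12/b + 2) * x * Real.exp ((4*c+2) * (Real.log x)^γ) < d := by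
        rw [hDdef, hBdef, hKdef, hLdef] at hd
        exact hd
      have hcond := cond_helper γ c b hγ0 hγ1 hb hc p hp0 hpmono hplow x hx4 hx3 hx5
        (by rw [hLdef] at hE1; exact hE1) d hd'
      have hdN : ⌊x⌋₊ ≤ d := by
        have h1 : (⌊x⌋₊ : ℝ) ≤ (d:ℝ) := le_trans (Nat.floor_le hx0.le) (le_trans hDx hd.le)
        exact_mod_cast h1
      have htail := binom_tail_half d ⌊x⌋₊ (p d) (hp0 d) (hp1 d) hdN hcond
      refine le_trans htail (MeasureTheory.measure_mono ?_)
      intro y hy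
      simp only [Set.mem_setOf_eq] at hy ⊢
      have h1 : x < (⌊x⌋₊:ℝ) + 1 := Nat.lt_floor_add_one x
      have h2 : (⌊x⌋₊:ℝ) + 1 ≤ (y:ℝ) := by exact_mod_cast hy
      linarith
    -- bind lower bound
    rw [PMF.toMeasure_bind_apply _ _ _ MeasurableSet.of_discrete]
    set Aset : Set ℕ := {d : ℕ | D < (d:ℝ)} with hAsetdef
    have step1 : (2:ℝ≥0∞)⁻¹ * μ.toMeasure Aset ≤
        ∑' d, μ d * ((PMF.binomial (Real.toNNReal (p d))
          (Real.toNNReal_le_one.mpr (hp1 d)) d).map Fin.val).toMeasure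
            {y : ℕ | x < (y:ℝ)} := by
      rw [PMF.toMeasure_apply (p := μ) MeasurableSet.of_discrete, ← ENNReal.tsum_mul_left]
      apply ENNReal.tsum_le_tsum
      intro d
      by_cases hdA : d ∈ Aset
      · rw [Set.indicator_of_mem hdA]
        rw [mul_comm]
        exact mul_le_mul_right (key d hdA) _
      · rw [Set.indicator_of_notMem hdA]
        simp
    -- log D facts
    have hlogD : Real.log D = Real.log B + L + K * L^γ := by
      rw [hDdef, Real.log_mul (by positivity) (Real.exp_ne_zero _),
        Real.log_mul (ne_of_gt hBpos) (ne_of_gt hx0), Real.log_exp, hLdef]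
    have hLlogD : L ≤ Real.log D := by
      rw [hLdef]; exact Real.log_le_log hx0 hDx
    have hlogDpos : 0 < Real.log D := by linarith
    have hlogD2L : Real.log D ≤ 2 * L := by
      rw [hlogD]
      rw [hLdef] at hEB ⊢
      linarith
    have hlogDγ : (Real.log D)^γ ≤ 2 * L^γ := by
      calc (Real.log D)^γ ≤ (2*L)^γ := Real.rpow_le_rpow hlogDpos.le hlogD2L hγ0.le
        _ = (2:ℝ)^γ * L^γ := Real.mul_rpow (by norm_num) (by linarith)
        _ ≤ 2 * L^γ := by
            have h2γ : (2:ℝ)^γ ≤ (2:ℝ)^(1:ℝ) :=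
              Real.rpow_le_rpow_of_exponent_le (by norm_num) hγ1.le
            rw [Real.rpow_one] at h2γ
            nlinarith
    have hgamma1 : (Real.log D)^(γ-1) * Real.log D = (Real.log D)^γ := by
      rw [← Real.rpow_add_one (ne_of_gt hlogDpos)]
      norm_num
    -- t log D ≤ t L + A1 L^γ
    have htlogD : t * Real.log D ≤ t * L + A1 * L^γ := by
      rw [hlogD]
      have hs : Real.log B + K * L^γ ≤ (|Real.log B| + K) * L^γ := by
        have h1 : Real.log B ≤ |Real.log B| := le_abs_self _
        have h2 : |Real.log B| ≤ |Real.log B| * L^γ :=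
          le_mul_of_one_le_right (abs_nonneg _) hLγ1
        nlinarith
      have hS0 : (0:ℝ) ≤ (|Real.log B| + K) * L^γ := by positivity
      have ht1 : 1 ≤ t := by rw [htdef]; linarith
      have ht2 : t ≤ 2 := by rw [htdef]; linarith
      have h3 : t * (Real.log B + K * L^γ) ≤ 2 * ((|Real.log B| + K) * L^γ) := by
        rcases le_or_gt 0 (Real.log B + K * L^γ) with hpos | hneg
        · calc t * (Real.log B + K * L^γ) ≤ 2 * (Real.log B + K * L^γ) := by nlinarith
            _ ≤ 2 * ((|Real.log B| + K) * L^γ) := by linarith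
        · nlinarith
      rw [hA1def]
      nlinarith
    -- real inequality
    have hreal : x ^ (-t) * Real.exp (-(A1 + 2*C + 1) * L^γ) * 2 ≤
        D ^ (-t - C * (Real.log D)^(γ-1)) := by
      have hDrw : D ^ (-t - C * (Real.log D)^(γ-1)) =
          Real.exp ((-t - C * (Real.log D)^(γ-1)) * Real.log D) := by
        rw [Real.rpow_def_of_pos hDpos, mul_comm]
      have harg : (-t - C * (Real.log D)^(γ-1)) * Real.log D =
          -(t * Real.log D) - C * (Real.log D)^γ := by
        rw [← hgamma1]; ring
      have hargge : -(t * L) - (A1 + 2*C) * L^γ ≤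
          (-t - C * (Real.log D)^(γ-1)) * Real.log D := by
        rw [harg]
        nlinarith [htlogD, hlogDγ, hC]
      have hxrw : x ^ (-t) = Real.exp (-(t * L)) := by
        rw [Real.rpow_def_of_pos hx0, ← hLdef]
        ring_nf
      have h2exp : (2:ℝ) ≤ Real.exp (L^γ) := by
        have := Real.add_one_le_exp (1:ℝ)
        have h2 : Real.exp 1 ≤ Real.exp (L^γ) := Real.exp_le_exp.2 hLγ1
        linarith
      calc x ^ (-t) * Real.exp (-(A1 + 2*C + 1) * L^γ) * 2
          = 2 * Real.exp (-(t * L) + -(A1 + 2*C + 1) * L^γ) := by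
            rw [hxrw, ← Real.exp_add]; ring
        _ ≤ Real.exp (L^γ) * Real.exp (-(t * L) + -(A1 + 2*C + 1) * L^γ) :=
            mul_le_mul_of_nonneg_right h2exp (Real.exp_pos _).le
        _ = Real.exp (-(t * L) - (A1 + 2*C) * L^γ) := by
            rw [← Real.exp_add]; congr 1; ring
        _ ≤ Real.exp ((-t - C * (Real.log D)^(γ-1)) * Real.log D) :=
            Real.exp_le_exp.2 hargge
        _ = D ^ (-t - C * (Real.log D)^(γ-1)) := hDrw.symm
    -- assemble
    have step2 : ENNReal.ofReal (D ^ (-t - C * (Real.log D)^(γ-1))) ≤ μ.toMeasure Aset := hμD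
    calc ENNReal.ofReal (x ^ (-t) * Real.exp (-(A1 + 2*C + 1) * L^γ))
        = 2⁻¹ * ENNReal.ofReal (x ^ (-t) * Real.exp (-(A1 + 2*C + 1) * L^γ) * 2) := by
          rw [ENNReal.ofReal_mul' (by norm_num : (0:ℝ) ≤ 2)]
          rw [ENNReal.ofReal_ofNat, ← mul_assoc, mul_comm (2⁻¹ : ℝ≥0∞), mul_assoc,
            ENNReal.inv_mul_cancel (by norm_num) (by norm_num), mul_one]
      _ ≤ 2⁻¹ * ENNReal.ofReal (D ^ (-t - C * (Real.log D)^(γ-1))) :=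
          mul_le_mul_right (ENNReal.ofReal_le_ofReal hreal) _
      _ ≤ 2⁻¹ * μ.toMeasure Aset := mul_le_mul_right step2 _
      _ ≤ _ := step1
  obtain ⟨x₁, hx₁⟩ := Filter.eventually_atTop.1 main
  exact ⟨x₁, hx₁⟩
end
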